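/- arXiv:math/0312321 — 4 statements merged into one kernel-verified Lean document; each statement's English description precedes it below -/
import Mathlib

section
/- For every monic hyperbolic polynomial P of degree n ≥ 1, every real λ, and every convex function f : ℝ → ℝ: Σ_{i=1}^n f(x_i) ≤ Σ_{i=1}^n f(ζ_i − λ), where x_1, …, x_n are the roots of P and ζ_1, …, ζ_n are the roots of P − λP′ (with multiplicity). -/
open Polynomial Matrix Finset

private lemma jensen_ds {m : ℕ} (w : Fin m → Fin m → ℝ) (hw0 : ∀ i j, 0 ≤ w i j)
    (hrow : ∀ i, ∑ j, w i j = 1) (hcol : ∀ j, ∑ i, w i j = 1) (d : Fin m → ℝ)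
    (f : ℝ → ℝ) (hf : ConvexOn ℝ Set.univ f) :
    ∑ i, f (∑ j, w i j * d j) ≤ ∑ j, f (d j) := by
  have h1 : ∀ i, f (∑ j, w i j * d j) ≤ ∑ j, w i j * f (d j) := by
    intro i
    simpa [smul_eq_mul] using
      hf.map_sum_le (fun j (_ : j ∈ Finset.univ) => hw0 i j) (hrow i)
        (fun j _ => Set.mem_univ (d j))
  calc ∑ i, f (∑ j, w i j * d j) ≤ ∑ i, ∑ j, w i j * f (d j) :=
        Finset.sum_le_sum fun i _ => h1 i
    _ = ∑ j, f (d j) := by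
        rw [Finset.sum_comm]
        refine Finset.sum_congr rfl fun j _ => ?_
        rw [← Finset.sum_mul, hcol, one_mul]

private lemma conj_entry {m : ℕ} (U : Matrix (Fin m) (Fin m) ℝ) (g : Fin m → ℝ) (i : Fin m) :
    (U * Matrix.diagonal g * star U) i i = ∑ j, (U i j)^2 * g j := by
  rw [Matrix.mul_apply]
  refine Finset.sum_congr rfl fun j _ => ?_
  rw [Matrix.mul_diagonal]
  simp [Matrix.star_apply]
  ring

private lemma spec_real {m : ℕ} {A : Matrix (Fin m) (Fin m) ℝ} (hA : A.IsHermitian) :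
    A = (hA.eigenvectorUnitary : Matrix (Fin m) (Fin m) ℝ) * Matrix.diagonal hA.eigenvalues *
      star (hA.eigenvectorUnitary : Matrix (Fin m) (Fin m) ℝ) := by
  have h := hA.spectral_theorem
  simpa [RCLike.ofReal_real_eq_id] using h

private lemma det_eval_spec {m : ℕ} (A : Matrix (Fin m) (Fin m) ℝ) (hA : A.IsHermitian) (t : ℝ) :
    (t • (1 : Matrix (Fin m) (Fin m) ℝ) - A).det = eval t (∏ j, (X - C (hA.eigenvalues j))) := by
  set U : Matrix (Fin m) (Fin m) ℝ := (hA.eigenvectorUnitary : Matrix (Fin m) (Fin m) ℝ) with hU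
  have hU1 : U * star U = 1 := Matrix.mem_unitaryGroup_iff.mp hA.eigenvectorUnitary.2
  have key : t • (1 : Matrix (Fin m) (Fin m) ℝ) - A
      = U * Matrix.diagonal (fun j => t - hA.eigenvalues j) * star U := by
    have h1 : Matrix.diagonal (fun j => t - hA.eigenvalues j)
        = t • (1 : Matrix (Fin m) (Fin m) ℝ) - Matrix.diagonal hA.eigenvalues := by
      ext i j
      by_cases h : i = j <;> simp [h, Matrix.one_apply, Matrix.diagonal_apply]
    rw [h1, Matrix.mul_sub, Matrix.sub_mul]
    rw [mul_smul_comm, smul_mul_assoc, mul_one, hU1, ← spec_real hA]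
  have hdet : U.det * (star U).det = 1 := by rw [← det_mul, hU1, det_one]
  rw [key, det_mul, det_mul]
  calc U.det * (Matrix.diagonal (fun j => t - hA.eigenvalues j)).det * (star U).det
      = (Matrix.diagonal (fun j => t - hA.eigenvalues j)).det * (U.det * (star U).det) := by ring
    _ = ∏ j, (t - hA.eigenvalues j) := by rw [hdet, mul_one, Matrix.det_diagonal]
    _ = eval t (∏ j, (X - C (hA.eigenvalues j))) := by simp [eval_prod]

private lemma det_eval_poly {m : ℕ} (x : Fin m → ℝ) (l t : ℝ) (ht : t ∉ Set.range x) :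
    (t • (1 : Matrix (Fin m) (Fin m) ℝ) -
        (Matrix.diagonal x + Matrix.replicateCol Unit (fun _ => l) * Matrix.replicateRow Unit (fun _ => (1:ℝ)))).det
      = eval t ((∏ i, (X - C (x i))) - C l * derivative (∏ i, (X - C (x i)))) := by
  classical
  have hne : ∀ i, t - x i ≠ 0 := by
    intro i h
    exact ht ⟨i, by linarith [sub_eq_zero.mp h]⟩
  have hrw : t • (1 : Matrix (Fin m) (Fin m) ℝ) -
        (Matrix.diagonal x + Matrix.replicateCol Unit (fun _ => l) * Matrix.replicateRow Unit (fun _ => (1:ℝ)))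
      = Matrix.diagonal (fun i => t - x i) +
        Matrix.replicateCol Unit (fun _ => -l) * Matrix.replicateRow Unit (fun _ => (1:ℝ)) := by
    ext i j
    by_cases h : i = j
    · simp [h, Matrix.mul_apply, Matrix.one_apply, Matrix.diagonal_apply]
      ring
    · simp [h, Matrix.mul_apply, Matrix.one_apply, Matrix.diagonal_apply]
  have hA : IsUnit (Matrix.diagonal (fun i => t - x i)).det := by
    rw [Matrix.det_diagonal]
    exact (Finset.prod_ne_zero_iff.mpr fun i _ => hne i).isUnit
  rw [hrw, Matrix.det_add_replicateCol_mul_replicateRow hA]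
  -- compute the 1×1 determinant
  have hinv : (Matrix.diagonal (fun i => t - x i))⁻¹
      = Matrix.diagonal (fun i => (t - x i)⁻¹) := by
    refine Matrix.inv_eq_right_inv ?_
    rw [Matrix.diagonal_mul_diagonal]
    have : (fun i => (t - x i) * (t - x i)⁻¹) = fun _ : Fin m => (1:ℝ) := by
      funext i; exact mul_inv_cancel₀ (hne i)
    rw [this, Matrix.diagonal_one]
  have hdet1 : ((1 : Matrix Unit Unit ℝ) + Matrix.replicateRow Unit (fun _ : Fin m => (1:ℝ)) *
        (Matrix.diagonal (fun i => t - x i))⁻¹ * Matrix.replicateCol Unit (fun _ : Fin m => -l)).det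
      = 1 - l * ∑ i, (t - x i)⁻¹ := by
    rw [Matrix.det_unique, hinv]
    simp [Matrix.add_apply, Matrix.mul_apply, Matrix.one_apply, Matrix.diagonal_apply,
      Finset.sum_mul, Finset.mul_sum]
    have hc : ∑ i : Fin m, (t - x i)⁻¹ * l = ∑ i : Fin m, l * (t - x i)⁻¹ :=
      Finset.sum_congr rfl fun i _ => mul_comm _ _
    rw [hc, ← sub_eq_add_neg]
  rw [hdet1, Matrix.det_diagonal]
  -- the polynomial side
  have hder : derivative (∏ i : Fin m, (X - C (x i)))
      = ∑ i : Fin m, ∏ j ∈ Finset.univ.erase i, (X - C (x j)) := by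
    have h := Polynomial.derivative_prod (s := (Finset.univ : Finset (Fin m)).val)
      (f := fun i => X - C (x i))
    simp only [derivative_sub, derivative_X, derivative_C, sub_zero, mul_one] at h
    calc derivative (∏ i : Fin m, (X - C (x i)))
        = derivative (Multiset.map (fun i => X - C (x i))
            (Finset.univ : Finset (Fin m)).val).prod := rfl
      _ = (Multiset.map (fun i =>
            (Multiset.map (fun j => X - C (x j))
              ((Finset.univ : Finset (Fin m)).val.erase i)).prod)
            (Finset.univ : Finset (Fin m)).val).sum := h
      _ = ∑ i : Fin m, ∏ j ∈ Finset.univ.erase i, (X - C (x j)) := by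
          refine congrArg Multiset.sum (Multiset.map_congr rfl fun i _ => ?_)
          rw [← Finset.erase_val]
          rfl
  have hsplit : ∀ i : Fin m, (∏ k, (t - x k)) * (t - x i)⁻¹
      = ∏ j ∈ Finset.univ.erase i, (t - x j) := by
    intro i
    rw [← Finset.mul_prod_erase Finset.univ _ (Finset.mem_univ i), mul_comm (t - x i),
      mul_assoc, mul_inv_cancel₀ (hne i), mul_one]
  rw [hder]
  simp only [eval_sub, eval_mul, eval_C, eval_prod, eval_finset_sum, eval_X]
  have hS : (∏ i, (t - x i)) * (∑ i, (t - x i)⁻¹)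
      = ∑ i, ∏ j ∈ Finset.univ.erase i, (t - x j) := by
    rw [Finset.mul_sum]
    exact Finset.sum_congr rfl fun i _ => hsplit i
  calc (∏ i, (t - x i)) * (1 - l * ∑ i, (t - x i)⁻¹)
      = ∏ i, (t - x i) - l * ((∏ i, (t - x i)) * (∑ i, (t - x i)⁻¹)) := by ring
    _ = (∏ i, (t - x i)) - l * ∑ i, ∏ j ∈ Finset.univ.erase i, (t - x j) := by rw [hS]

theorem convex_sum_roots_le (n : ℕ) (hn : 1 ≤ n) (P : Polynomial ℝ)
    (hPm : P.Monic) (hPd : P.natDegree = n) (hhyp : P.roots.card = n)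
    (l : ℝ) (f : ℝ → ℝ) (hf : ConvexOn ℝ Set.univ f) :
    (P.roots.map f).sum ≤
      ((P - C l * Polynomial.derivative P).roots.map (fun t => f (t - l))).sum := by
  classical
  obtain ⟨L, hL⟩ : ∃ L : List ℝ, P.roots = ↑L := ⟨P.roots.toList, (Multiset.coe_toList _).symm⟩
  set m := L.length with hm
  set x : Fin m → ℝ := fun i => L[(i : ℕ)] with hx
  have hP : P = ∏ i, (X - C (x i)) := by
    have h1 := Polynomial.C_leadingCoeff_mul_prod_multiset_X_sub_C (p := P)
      (by rw [hhyp, hPd])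
    rw [hPm.leadingCoeff, Polynomial.C_1, one_mul] at h1
    rw [← h1, hL, Multiset.map_coe, Multiset.prod_coe]
    exact (Fin.prod_univ_fun_getElem L _).symm
  set B : Matrix (Fin m) (Fin m) ℝ :=
    Matrix.diagonal x + Matrix.replicateCol Unit (fun _ => l) * Matrix.replicateRow Unit (fun _ => (1:ℝ)) with hBdef
  have hB : B.IsHermitian := by
    show Bᴴ = B
    ext i j
    by_cases h : i = j <;>
      simp [hBdef, h, Matrix.conjTranspose_apply, Matrix.mul_apply, Matrix.diagonal_apply,
        eq_comm]
  set ζ : Fin m → ℝ := hB.eigenvalues with hζ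
  have hQ : P - C l * derivative P = ∏ j, (X - C (ζ j)) := by
    apply Polynomial.eq_of_infinite_eval_eq
    apply Set.Infinite.mono (s := (Set.range x)ᶜ)
    · intro t ht
      rw [hP]
      exact (det_eval_poly x l t ht).symm.trans (det_eval_spec B hB t)
    · exact (Set.finite_range x).infinite_compl
  have hroots : (P - C l * derivative P).roots = Multiset.map ζ Finset.univ.val := by
    rw [hQ]
    have h2 : (∏ j, (X - C (ζ j)))
        = (Multiset.map (fun a => X - C a) (Multiset.map ζ Finset.univ.val)).prod := by
      rw [Multiset.map_map]
      rfl
    rw [h2, roots_multiset_prod_X_sub_C]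
  -- rewrite both sums as finite sums
  have hRHS : ((P - C l * derivative P).roots.map (fun t => f (t - l))).sum
      = ∑ j, f (ζ j - l) := by
    rw [hroots, Multiset.map_map]
    rfl
  have hLHS : (P.roots.map f).sum = ∑ i, f (x i) := by
    rw [hL, Multiset.map_coe, Multiset.sum_coe]
    exact (Fin.sum_univ_fun_getElem L f).symm
  rw [hRHS, hLHS]
  -- Jensen / Schur-Horn step
  set U : Matrix (Fin m) (Fin m) ℝ := (hB.eigenvectorUnitary : Matrix (Fin m) (Fin m) ℝ) with hU
  have hU1 : U * star U = 1 := Matrix.mem_unitaryGroup_iff.mp hB.eigenvectorUnitary.2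
  have hU2 : star U * U = 1 := Matrix.mem_unitaryGroup_iff'.mp hB.eigenvectorUnitary.2
  set w : Fin m → Fin m → ℝ := fun i j => (U i j)^2 with hw
  have hrow : ∀ i, ∑ j, w i j = 1 := by
    intro i
    have h : (U * star U) i i = (1 : Matrix (Fin m) (Fin m) ℝ) i i := by rw [hU1]
    rw [Matrix.mul_apply, Matrix.one_apply_eq] at h
    rw [← h]
    refine Finset.sum_congr rfl fun j _ => ?_
    simp [hw, Matrix.star_apply, sq]
  have hcol : ∀ j, ∑ i, w i j = 1 := by
    intro j
    have h : (star U * U) j j = (1 : Matrix (Fin m) (Fin m) ℝ) j j := by rw [hU2]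
    rw [Matrix.mul_apply, Matrix.one_apply_eq] at h
    rw [← h]
    refine Finset.sum_congr rfl fun i _ => ?_
    simp [hw, Matrix.star_apply, sq]
  have hBx : ∀ i, ∑ j, w i j * ζ j = x i + l := by
    intro i
    have h1 : B i i = x i + l := by
      simp [hBdef, Matrix.add_apply, Matrix.mul_apply]
    have h2 := spec_real hB
    calc ∑ j, w i j * ζ j = (U * Matrix.diagonal ζ * star U) i i := (conj_entry U ζ i).symm
      _ = B i i := by rw [← h2]
      _ = x i + l := h1
  have hxd : ∀ i, x i = ∑ j, w i j * (ζ j - l) := by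
    intro i
    have h1 := hBx i
    have h2 := hrow i
    have h3 : ∑ j, w i j * (ζ j - l) = (∑ j, w i j * ζ j) - l * (∑ j, w i j) := by
      rw [Finset.mul_sum, ← Finset.sum_sub_distrib]
      exact Finset.sum_congr rfl fun j _ => by ring
    rw [h3, h1, h2]
    ring
  calc ∑ i, f (x i) = ∑ i, f (∑ j, w i j * (ζ j - l)) := by
        exact Finset.sum_congr rfl fun i _ => by rw [← hxd i]
    _ ≤ ∑ j, f (ζ j - l) :=
        jensen_ds w (fun i j => sq_nonneg _) hrow hcol _ f hf
end

section
/- Let P(z) = z^n − 1 with n ≥ 5 and let λ ∈ ℂ*. If |λ| is small enough, then the complex root multisets (viewed as multisets in ℝ²) of P and of (1 − λD)e^{λD}P are incomparable in the multivariate spectral order; in particular, neither convex hull of the zero sets contains the other: there exist roots z'(λ) of P(z+λ) − λP′(z+λ) with |z'| > 1 and with |z'| < 1. -/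
open Polynomial

open Finset in

lemma taylor_tail (M J : ℕ) (hJ : J ≤ M) (z u : ℂ) (hz : ‖z‖ = 1)
    (hu : ‖u‖ ≤ 1) :
    ‖(z + u) ^ M - ∑ k ∈ Finset.Ico J (M + 1), z ^ k * u ^ (M - k) * (M.choose k)‖ ≤
      2 ^ M * ‖u‖ ^ (M + 1 - J) := by
  have hsplit : (z + u) ^ M = (∑ k ∈ Finset.range J, z ^ k * u ^ (M - k) * (M.choose k)) +
      ∑ k ∈ Finset.Ico J (M + 1), z ^ k * u ^ (M - k) * (M.choose k) := by
    rw [add_pow, Finset.range_eq_Ico, ← Finset.sum_Ico_consecutive _ (Nat.zero_le J) (by omega),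
      Finset.range_eq_Ico]
  rw [hsplit, add_sub_cancel_right]
  calc ‖∑ k ∈ Finset.range J, z ^ k * u ^ (M - k) * (M.choose k)‖
      ≤ ∑ k ∈ Finset.range J, ‖z ^ k * u ^ (M - k) * (M.choose k)‖ := by
        exact norm_sum_le _ _
    _ ≤ ∑ k ∈ Finset.range J, ‖u‖ ^ (M + 1 - J) * (M.choose k) := by
        apply Finset.sum_le_sum
        intro k hk
        simp only [Finset.mem_range] at hk
        rw [norm_mul, norm_mul, norm_pow, norm_pow, hz, one_pow, one_mul, Complex.norm_natCast]
        apply mul_le_mul_of_nonneg_right _ (by positivity)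
        exact pow_le_pow_of_le_one (norm_nonneg u) hu (by omega)
    _ = ‖u‖ ^ (M + 1 - J) * ∑ k ∈ Finset.range J, (M.choose k : ℝ) := by
        rw [Finset.mul_sum]
    _ ≤ ‖u‖ ^ (M + 1 - J) * 2 ^ M := by
        apply mul_le_mul_of_nonneg_left _ (by positivity)
        have h1 : ∑ k ∈ Finset.range J, (M.choose k : ℝ) ≤ ∑ k ∈ Finset.range (M+1), (M.choose k : ℝ) := by
          apply Finset.sum_le_sum_of_subset_of_nonneg
          · exact Finset.range_subset_range.2 (by omega)
          · intro i _ _; positivity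
        calc ∑ k ∈ Finset.range J, (M.choose k : ℝ) ≤ _ := h1
          _ = 2 ^ M := by rw [← Nat.cast_sum]; norm_cast; exact Nat.sum_range_choose M
    _ = 2 ^ M * ‖u‖ ^ (M + 1 - J) := by ring

lemma choose_cast_2 (m : ℕ) : ((m+5).choose (m+3) : ℂ) = (m+5)*(m+4)/2 := by
  have h : (m+5).choose (m+3) = (m+5).choose 2 := by
    have := Nat.choose_symm (show m+3 ≤ m+5 by omega)
    simpa using this.symm
  rw [h, Nat.cast_choose_two]
  push_cast; ring

lemma taylor3' (m : ℕ) (z u : ℂ) (hz : ‖z‖ = 1) (hu : ‖u‖ ≤ 1) :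
    ‖(z + u) ^ (m+5) - z ^ (m+5) - (m+5 : ℂ) * z ^ (m+4) * u -
      ((m+5 : ℂ) * (m+4) / 2) * z ^ (m+3) * u ^ 2‖ ≤ 2 ^ (m+5) * ‖u‖ ^ 3 := by
  have h := taylor_tail (m+5) (m+3) (by omega) z u hz hu
  have hsum : ∑ k ∈ Finset.Ico (m+3) (m+5+1), z ^ k * u ^ (m+5-k) * ((m+5).choose k) =
      z ^ (m+5) + (m+5 : ℂ) * z ^ (m+4) * u + ((m+5 : ℂ) * (m+4) / 2) * z ^ (m+3) * u ^ 2 := by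
    rw [Finset.sum_Ico_succ_top (by omega), Finset.sum_Ico_succ_top (by omega),
      Finset.sum_Ico_succ_top (by omega), Finset.Ico_self, Finset.sum_empty]
    have e1 : m+5-(m+5) = 0 := by omega
    have e2 : m+5-(m+4) = 1 := by omega
    have e3 : m+5-(m+3) = 2 := by omega
    have c1 : ((m+5).choose (m+5) : ℂ) = 1 := by simp
    have c2 : ((m+5).choose (m+4) : ℂ) = (m+5 : ℂ) := by
      have : (m+5).choose (m+4) = (m+5).choose 1 := by
        have := Nat.choose_symm (show m+4 ≤ m+5 by omega)
        simpa using this.symm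
      rw [this, Nat.choose_one_right]; push_cast; ring
    rw [e1, e2, e3, c1, c2, choose_cast_2]
    push_cast; ring
  rw [hsum] at h
  have e4 : m+5+1-(m+3) = 3 := by omega
  rw [e4] at h
  calc ‖_‖ = ‖(z+u)^(m+5) - (z ^ (m+5) + (m+5 : ℂ) * z ^ (m+4) * u +
        ((m+5 : ℂ) * (m+4) / 2) * z ^ (m+3) * u ^ 2)‖ := by ring_nf
    _ ≤ _ := h

lemma taylor2' (m : ℕ) (z u : ℂ) (hz : ‖z‖ = 1) (hu : ‖u‖ ≤ 1) :
    ‖(z + u) ^ (m+4) - z ^ (m+4) - (m+4 : ℂ) * z ^ (m+3) * u‖ ≤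
      2 ^ (m+4) * ‖u‖ ^ 2 := by
  have h := taylor_tail (m+4) (m+3) (by omega) z u hz hu
  have hsum : ∑ k ∈ Finset.Ico (m+3) (m+4+1), z ^ k * u ^ (m+4-k) * ((m+4).choose k) =
      z ^ (m+4) + (m+4 : ℂ) * z ^ (m+3) * u := by
    rw [Finset.sum_Ico_succ_top (by omega), Finset.sum_Ico_succ_top (by omega),
      Finset.Ico_self, Finset.sum_empty]
    have e1 : m+4-(m+4) = 0 := by omega
    have e2 : m+4-(m+3) = 1 := by omega
    have c1 : ((m+4).choose (m+4) : ℂ) = 1 := by simp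
    have c2 : ((m+4).choose (m+3) : ℂ) = (m+4 : ℂ) := by
      have : (m+4).choose (m+3) = (m+4).choose 1 := by
        have := Nat.choose_symm (show m+3 ≤ m+4 by omega)
        simpa using this.symm
      rw [this, Nat.choose_one_right]; push_cast; ring
    rw [e1, e2, c1, c2]
    push_cast; ring
  rw [hsum] at h
  have e4 : m+4+1-(m+3) = 2 := by omega
  rw [e4] at h
  calc ‖_‖ = ‖(z+u)^(m+4) - (z ^ (m+4) + (m+4 : ℂ) * z ^ (m+3) * u)‖ := by
        ring_nf
    _ ≤ _ := h

lemma deriv_prod_bound (a : ℂ) (d : ℝ) (hd : 0 < d) (t : Multiset ℂ)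
    (h : ∀ r ∈ t, d ≤ ‖a - r‖) :
    ‖Polynomial.eval a (Polynomial.derivative (Multiset.map (fun r => X - C r) t).prod)‖
      ≤ Multiset.card t * ‖Polynomial.eval a (Multiset.map (fun r => X - C r) t).prod‖ / d := by
  induction t using Multiset.induction_on with
  | empty => simp
  | cons r s ih =>
    have hr : d ≤ ‖a - r‖ := h r (Multiset.mem_cons_self r s)
    have ihs := ih (fun x hx => h x (Multiset.mem_cons_of_mem hx))
    rw [Multiset.map_cons, Multiset.prod_cons, derivative_mul]
    simp only [derivative_sub, derivative_X, derivative_C, sub_zero, one_mul, eval_add, eval_mul,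
      eval_sub, eval_X, eval_C, Multiset.card_cons]
    set P := (Multiset.map (fun r => X - C r) s).prod
    have h1 : ‖eval a P + (a - r) * eval a (derivative P)‖ ≤
        ‖eval a P‖ + ‖a - r‖ * ‖eval a (derivative P)‖ := by
      calc _ ≤ ‖eval a P‖ + ‖(a - r) * eval a (derivative P)‖ :=
            norm_add_le _ _
        _ = _ := by rw [norm_mul]
    have h2 : ‖(a - r) * eval a P‖ = ‖a - r‖ * ‖eval a P‖ :=
      norm_mul _ _
    rw [h2]
    set p := ‖eval a P‖
    set q := ‖a - r‖
    set Dp := ‖eval a (derivative P)‖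
    have hp : 0 ≤ p := norm_nonneg _
    have hDp : 0 ≤ Dp := norm_nonneg _
    have hk : (0:ℝ) ≤ Multiset.card s := by positivity
    rw [le_div_iff₀ hd] at ihs ⊢
    push_cast
    nlinarith

lemma exists_root_near (G : Polynomial ℂ) (hm : G.Monic) (N : ℕ) (hN : 0 < N)
    (hdeg : G.natDegree = N) (a : ℂ) (hG' : Polynomial.eval a (Polynomial.derivative G) ≠ 0) :
    ∃ w, G.IsRoot w ∧ ‖a - w‖ ≤
      N * ‖Polynomial.eval a G‖ / ‖Polynomial.eval a (Polynomial.derivative G)‖ := by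
  have hGne : G ≠ 0 := hm.ne_zero
  have hsplits : Splits G := IsAlgClosed.splits G
  have hcard : Multiset.card G.roots = N := by
    rw [Polynomial.splits_iff_card_roots.mp hsplits, hdeg]
  have hprod : G = (Multiset.map (fun r => X - C r) G.roots).prod :=
    hsplits.eq_prod_roots_of_monic hm
  by_cases hGa : Polynomial.eval a G = 0
  · exact ⟨a, hGa, by simp [sub_self]; positivity⟩
  · -- roots nonempty
    have hne : G.roots.toFinset.Nonempty := by
      rw [Finset.nonempty_iff_ne_empty]
      intro hemp
      have : G.roots = 0 := by
        rwa [← Multiset.toFinset_eq_empty]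
      rw [this] at hcard; simp at hcard; omega
    obtain ⟨w, hwmem, hwmin⟩ := Finset.exists_min_image G.roots.toFinset
      (fun r => ‖a - r‖) hne
    have hwroot : w ∈ G.roots := Multiset.mem_toFinset.mp hwmem
    refine ⟨w, Polynomial.isRoot_of_mem_roots hwroot, ?_⟩
    set d := ‖a - w‖ with hd_def
    have hdpos : 0 < d := by
      rw [hd_def]
      rcases eq_or_ne a w with rfl | hne'
      · exact absurd (Polynomial.isRoot_of_mem_roots hwroot) hGa
      · simpa using sub_ne_zero.2 hne'
    have hdle : ∀ r ∈ G.roots, d ≤ ‖a - r‖ := fun r hr =>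
      hwmin r (Multiset.mem_toFinset.mpr hr)
    have hbound := deriv_prod_bound a d hdpos G.roots hdle
    rw [← hprod, hcard] at hbound
    -- hbound : |G'(a)| ≤ N * |G(a)| / d
    have habs' : 0 < ‖Polynomial.eval a (Polynomial.derivative G)‖ := by
      simpa [norm_pos_iff] using hG'
    rw [le_div_iff₀ hdpos] at hbound
    rw [le_div_iff₀ habs']
    nlinarith

lemma re_sq_eq (a : ℂ) : (a.re)^2 = ((a^2).re + Complex.normSq a)/2 := by
  simp [Complex.normSq_apply, pow_two, Complex.mul_re]

lemma exists_dirs (n : ℕ) (hn : 5 ≤ n) (μ : ℂ) (hμ : μ ≠ 0) :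
    (∃ v : ℂ, v ^ n = 1 ∧ ‖μ‖ / 2 ≤ (v ^ 2 * μ).re) ∧
    (∃ v : ℂ, v ^ n = 1 ∧ (v ^ 2 * μ).re ≤ -(‖μ‖ / 2)) := by
  have hn0 : n ≠ 0 := by omega
  set ζ := Complex.exp (2 * Real.pi * Complex.I / n) with hζ
  have hprim : IsPrimitiveRoot ζ n := Complex.isPrimitiveRoot_exp n hn0
  have hζn : ζ ^ n = 1 := hprim.pow_eq_one
  have h2 : ζ ^ 2 ≠ 1 := hprim.pow_ne_one_of_pos_of_lt (by norm_num) (by omega)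
  have h4 : ζ ^ 4 ≠ 1 := hprim.pow_ne_one_of_pos_of_lt (by norm_num) (by omega)
  have habsζ : ‖ζ‖ = 1 := by
    rw [hζ, Complex.norm_exp]
    have : (2 * Real.pi * Complex.I / n).re = 0 := by
      simp [Complex.div_re]
    rw [this, Real.exp_zero]
  have S2 : ∑ k ∈ Finset.range n, (ζ ^ 2) ^ k = 0 := by
    rw [geom_sum_eq h2 n]
    have : (ζ ^ 2) ^ n = 1 := by rw [← pow_mul, mul_comm, pow_mul, hζn, one_pow]
    rw [this, sub_self, zero_div]
  have S4 : ∑ k ∈ Finset.range n, (ζ ^ 4) ^ k = 0 := by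
    rw [geom_sum_eq h4 n]
    have : (ζ ^ 4) ^ n = 1 := by rw [← pow_mul, mul_comm, pow_mul, hζn, one_pow]
    rw [this, sub_self, zero_div]
  set f : ℕ → ℝ := fun k => ((ζ ^ k) ^ 2 * μ).re with hf
  have hsum : ∑ k ∈ Finset.range n, f k = 0 := by
    rw [hf]
    simp only
    rw [← Complex.re_sum]
    have : ∑ k ∈ Finset.range n, (ζ ^ k) ^ 2 * μ = (∑ k ∈ Finset.range n, (ζ ^ 2) ^ k) * μ := by
      rw [Finset.sum_mul]
      congr 1; ext k; rw [← pow_mul, ← pow_mul, mul_comm 2 k]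
    rw [this, S2, zero_mul, Complex.zero_re]
  have hnormSq : ∀ k, Complex.normSq ((ζ ^ k) ^ 2 * μ) = Complex.normSq μ := by
    intro k
    rw [Complex.normSq_mul]
    have : Complex.normSq ((ζ ^ k) ^ 2) = 1 := by
      rw [← Complex.sq_norm]
      rw [norm_pow, norm_pow, habsζ]
      norm_num
    rw [this, one_mul]
  have hsumsq : ∑ k ∈ Finset.range n, (f k)^2 = n * Complex.normSq μ / 2 := by
    have : ∀ k, (f k)^2 = (((ζ ^ 4) ^ k * μ^2).re + Complex.normSq μ)/2 := by
      intro k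
      rw [hf]; simp only
      rw [re_sq_eq]
      congr 2
      · congr 1; rw [mul_pow, ← pow_mul, ← pow_mul, ← pow_mul]; ring_nf
      · exact hnormSq k
    simp_rw [this]
    rw [← Finset.sum_div, Finset.sum_add_distrib, ← Complex.re_sum, ← Finset.sum_mul, S4,
      zero_mul, Complex.zero_re, zero_add, Finset.sum_const, Finset.card_range]
    simp [nsmul_eq_mul]
  have hfb : ∀ k, |f k| ≤ ‖μ‖ := by
    intro k
    calc |f k| ≤ ‖(ζ ^ k) ^ 2 * μ‖ := Complex.abs_re_le_norm _
      _ = ‖μ‖ := by rw [norm_mul, norm_pow, norm_pow, habsζ]; norm_num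
  have hnon : (Finset.range n).Nonempty := ⟨0, by simp; omega⟩
  obtain ⟨ka, hka, hA⟩ := Finset.exists_max_image (Finset.range n) f hnon
  obtain ⟨kb, hkb, hB⟩ := Finset.exists_min_image (Finset.range n) f hnon
  set A := f ka with hAdef
  set B := f kb with hBdef
  have hpt : ∀ k ∈ Finset.range n, (f k)^2 ≤ (A + B) * f k - A * B := by
    intro k hk
    have h1 : f k ≤ A := hA k hk
    have h2 : B ≤ f k := hB k hk
    nlinarith
  have hsum2 : ∑ k ∈ Finset.range n, (f k)^2 ≤ - (n * (A * B)) := by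
    calc ∑ k ∈ Finset.range n, (f k)^2 ≤ ∑ k ∈ Finset.range n, ((A + B) * f k - A * B) :=
          Finset.sum_le_sum hpt
      _ = (A + B) * (∑ k ∈ Finset.range n, f k) - n * (A * B) := by
          rw [Finset.sum_sub_distrib, ← Finset.mul_sum]
          simp [mul_comm]
      _ = - (n * (A * B)) := by rw [hsum, mul_zero, zero_sub]
  have hμpos : 0 < ‖μ‖ := by simpa [norm_pos_iff] using hμ
  have hnsq : Complex.normSq μ = ‖μ‖ ^ 2 := (Complex.sq_norm μ).symm
  have hnpos : (0:ℝ) < n := by positivity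
  have key : -(A * B) ≥ ‖μ‖ ^2 / 2 := by
    rw [hsumsq, hnsq] at hsum2
    nlinarith
  have hAb : A ≤ ‖μ‖ := le_trans (le_abs_self _) (hfb ka)
  have hBb : -‖μ‖ ≤ B := by
    have := hfb kb
    rw [abs_le] at this; exact this.1
  have hBA : B ≤ A := hB ka hka
  have hApos0 : 0 < A := by
    by_contra hc
    push_neg at hc
    have hB0 : B ≤ 0 := le_trans hBA hc
    nlinarith [key, hμpos]
  have hBneg0 : B < 0 := by
    by_contra hc
    push_neg at hc
    have hA0 : 0 ≤ A := le_trans hc hBA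
    nlinarith [key, hμpos]
  have hApos : ‖μ‖ / 2 ≤ A := by nlinarith [key, hApos0, hBb, hμpos]
  have hBneg : B ≤ -(‖μ‖ / 2) := by nlinarith [key, hBneg0, hAb, hμpos]
  constructor
  · exact ⟨ζ ^ ka, by rw [← pow_mul, mul_comm, pow_mul, hζn, one_pow], hApos⟩
  · exact ⟨ζ ^ kb, by rw [← pow_mul, mul_comm, pow_mul, hζn, one_pow], hBneg⟩

noncomputable def Kc (m : ℕ) : ℝ := 2^(m+8) + (m+5) * 2^(m+6) + (m+5)^4

lemma abs_eq_one_of_pow (k : ℕ) (v : ℂ) (hv : v ^ (k+1) = 1) : ‖v‖ = 1 := by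
  have h1 : ‖v‖ ^ (k+1) = 1 := by rw [← norm_pow, hv, norm_one]
  have h0 := norm_nonneg v
  rcases lt_trichotomy (‖v‖) 1 with h | h | h
  · exfalso
    have : ‖v‖ ^ (k+1) ≤ ‖v‖ ^ 1 := pow_le_pow_of_le_one h0 h.le (by omega)
    simp at this; linarith
  · exact h
  · exfalso
    have : ‖v‖ ^ 1 ≤ ‖v‖ ^ (k+1) := pow_le_pow_right₀ h.le (by omega)
    simp at this; linarith

set_option maxHeartbeats 2000000 in
lemma root_near (m : ℕ) (l : ℂ) (hl : l ≠ 0)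
    (hts : ‖l‖ < 1 / (8 * Kc m + 8 * (m+5) + 8))
    (v : ℂ) (hv : v ^ (m+5) = 1) :
    ∃ w : ℂ, (w ^ (m+5) - (m+5 : ℂ) * l * w ^ (m+4) - 1 = 0) ∧
      ‖w - (v + (l + ((m+4 : ℂ)/2) * v ^ (m+4) * l^2))‖ ≤
        4 * Kc m * ‖l‖ ^ 3 := by
  set t := ‖l‖ with ht_def
  have ht0 : 0 < t := by simpa [ht_def, norm_pos_iff] using hl
  have hK1 : (1:ℝ) ≤ Kc m := by
    have h2 : (1:ℝ) ≤ 2^(m+8) := one_le_pow₀ (by norm_num)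
    have : (0:ℝ) ≤ (m+5) * 2^(m+6) := by positivity
    have : (0:ℝ) ≤ ((m:ℝ)+5)^4 := by positivity
    unfold Kc; push_cast; nlinarith
  have hKpos : (0:ℝ) < Kc m := by linarith
  have hden : (0:ℝ) < 8 * Kc m + 8 * (m+5) + 8 := by positivity
  -- basic smallness facts
  have htK : 8 * Kc m * t < 1 := by
    rw [lt_div_iff₀ hden] at hts
    nlinarith
  have htn : t * (4 * ((m:ℝ)+5)) < 1 := by
    rw [lt_div_iff₀ hden] at hts
    nlinarith
  have ht8 : t < 1/8 := by
    rw [lt_div_iff₀ hden] at hts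
    nlinarith
  have habsv : ‖v‖ = 1 := abs_eq_one_of_pow (m+4) v hv
  set y := v ^ (m+4) with hy_def
  have habsy : ‖y‖ = 1 := by rw [hy_def, norm_pow, habsv, one_pow]
  set c : ℂ := (m+4 : ℂ)/2 with hc_def
  have habsc : ‖c‖ = ((m:ℝ)+4)/2 := by
    rw [hc_def, norm_div]
    have : ((m:ℂ)+4) = ((m+4 : ℕ) : ℂ) := by push_cast; ring
    rw [this, Complex.norm_natCast]
    push_cast; norm_num
  set u := l + c * y * l^2 with hu_def
  have hcyl : ‖c * y * l^2‖ = ((m:ℝ)+4)/2 * t^2 := by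
    rw [norm_mul, norm_mul, habsc, habsy, norm_pow]
    ring
  have hu2 : ‖u‖ ≤ 2 * t := by
    calc ‖u‖ ≤ ‖l‖ + ‖c * y * l^2‖ := norm_add_le _ _
      _ = t + ((m:ℝ)+4)/2 * t^2 := by rw [hcyl]
      _ ≤ 2 * t := by nlinarith
  have hu1 : ‖u‖ ≤ 1 := by nlinarith
  set w₀ := v + u with hw₀_def
  -- the polynomial G
  set G : Polynomial ℂ := X^(m+5) - C ((m+5:ℂ)*l) * X^(m+4) - 1 with hG_def
  have hGalt : G = X^(m+5) - (C ((m+5:ℂ)*l) * X^(m+4) + 1) := by rw [hG_def]; ring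
  have hdlt : (C ((m+5:ℂ)*l) * X^(m+4) + 1).degree < ((m+5 : ℕ) : WithBot ℕ) := by
    apply lt_of_le_of_lt (degree_add_le _ _)
    apply max_lt
    · exact lt_of_le_of_lt (degree_C_mul_X_pow_le _ _) (by exact_mod_cast by omega)
    · exact lt_of_le_of_lt degree_one_le (by exact_mod_cast by omega)
  have hmonic : G.Monic := by rw [hGalt]; exact monic_X_pow_sub hdlt
  have hdeg : G.natDegree = m+5 := by
    have hdegree : G.degree = ((m+5 : ℕ) : WithBot ℕ) := by
      rw [hGalt, degree_sub_eq_left_of_degree_lt (by rw [degree_X_pow]; exact hdlt), degree_X_pow]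
    exact natDegree_eq_of_degree_eq_some hdegree
  have hGeval : ∀ x : ℂ, Polynomial.eval x G = x^(m+5) - (m+5:ℂ)*l*x^(m+4) - 1 := by
    intro x; simp [hG_def]
  have hG'eval : ∀ x : ℂ, Polynomial.eval x (Polynomial.derivative G) =
      (m+5:ℂ) * x^(m+3) * (x - (m+4:ℂ)*l) := by
    intro x
    rw [hG_def]
    simp [derivative_sub, derivative_X_pow, derivative_C_mul]
    push_cast
    ring
  -- helper triangle facts
  have habs_sub : ∀ a b : ℂ, ‖a - b‖ ≤ ‖a‖ + ‖b‖ := by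
    intro a b
    rw [sub_eq_add_neg]
    calc ‖a + -b‖ ≤ ‖a‖ + ‖-b‖ := norm_add_le _ _
      _ = ‖a‖ + ‖b‖ := by rw [norm_neg]
  -- Taylor bounds
  have hEa := taylor3' m v u habsv hu1
  have hEb := taylor2' m v u habsv hu1
  -- key algebraic identity
  have hkey : Polynomial.eval w₀ G =
      ((v+u)^(m+5) - v^(m+5) - (m+5:ℂ)*v^(m+4)*u - ((m+5:ℂ)*(m+4)/2)*v^(m+3)*u^2)
      - (m+5:ℂ)*l*((v+u)^(m+4) - v^(m+4) - (m+4:ℂ)*v^(m+3)*u)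
      + ((m+5:ℂ)*(m+4)/2)*((m+4:ℂ)/2)^2*(v^(m+4))^4*l^4 := by
    rw [hGeval w₀, hw₀_def, hu_def, hc_def, hy_def]
    linear_combination (1 + ((m+5:ℂ)*(m+4)/2)*l^2*v^(m+3)
      - ((m+5:ℂ)*(m+4)/2)*((m+4:ℂ)/2)^2*l^4*v^(3*m+11)) * hv
  set M := (m : ℝ) with hM_def
  have hM : (0:ℝ) ≤ M := Nat.cast_nonneg m
  have hcast5 : ‖(m+5:ℂ)‖ = M + 5 := by
    have e : ((m:ℂ)+5) = ((m+5:ℕ):ℂ) := by push_cast; ring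
    rw [e, Complex.norm_natCast]; push_cast; ring
  have hcast45 : ‖(m+5:ℂ)*(m+4)/2‖ = (M+5)*(M+4)/2 := by
    rw [norm_div, norm_mul]
    have e4 : ((m:ℂ)+4) = ((m+4:ℕ):ℂ) := by push_cast; ring
    have e2 : ‖(2:ℂ)‖ = 2 := by norm_num
    rw [hcast5, e4, Complex.norm_natCast, e2]; push_cast; ring
  -- bound |G(w₀)|
  have ht1 : t ≤ 1 := by linarith
  have habs_last : ‖((m+5:ℂ)*(m+4)/2)*((m+4:ℂ)/2)^2*(v^(m+4))^4*l^4‖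
      ≤ (M+5)^4 * t^4 := by
    rw [norm_mul, norm_mul, norm_mul, norm_pow, norm_pow, norm_pow, hcast45, habsc, habsv, ht_def]
    have h43 : (M+4)^3 ≤ (M+5)^3 := pow_le_pow_left₀ (by linarith) (by linarith) 3
    have htpow : (0:ℝ) ≤ ‖l‖ ^ 4 := by positivity
    rw [← ht_def]
    simp only [one_pow, mul_one]
    have e : (M+5)*(M+4)/2 * ((M+4)/2)^2 = (M+5)*(M+4)^3/8 := by ring
    have h2 : (M+5)*(M+4)^3 ≤ (M+5)*(M+5)^3 := mul_le_mul_of_nonneg_left h43 (by linarith)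
    have e2 : (M+5)*(M+5)^3 = (M+5)^4 := by ring
    have hp : (0:ℝ) ≤ (M+5)^4 := by positivity
    have hb : (M+5)*(M+4)/2 * ((M+4)/2)^2 ≤ (M+5)^4 := by rw [e]; linarith
    have hl4 : ‖l^4‖ = t^4 := by rw [norm_pow, ← ht_def]
    rw [hl4]
    exact mul_le_mul_of_nonneg_right hb (by positivity)
  have htri : ‖Polynomial.eval w₀ G‖ ≤
      ‖(v+u)^(m+5) - v^(m+5) - (m+5:ℂ)*v^(m+4)*u - ((m+5:ℂ)*(m+4)/2)*v^(m+3)*u^2‖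
      + (M+5) * t * ‖(v+u)^(m+4) - v^(m+4) - (m+4:ℂ)*v^(m+3)*u‖
      + (M+5)^4 * t^4 := by
    rw [hkey]
    have t1 := norm_add_le
      (((v+u)^(m+5) - v^(m+5) - (m+5:ℂ)*v^(m+4)*u - ((m+5:ℂ)*(m+4)/2)*v^(m+3)*u^2)
        - (m+5:ℂ)*l*((v+u)^(m+4) - v^(m+4) - (m+4:ℂ)*v^(m+3)*u))
      (((m+5:ℂ)*(m+4)/2)*((m+4:ℂ)/2)^2*(v^(m+4))^4*l^4)
    have t2 := habs_sub
      ((v+u)^(m+5) - v^(m+5) - (m+5:ℂ)*v^(m+4)*u - ((m+5:ℂ)*(m+4)/2)*v^(m+3)*u^2)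
      ((m+5:ℂ)*l*((v+u)^(m+4) - v^(m+4) - (m+4:ℂ)*v^(m+3)*u))
    have t3 : ‖(m+5:ℂ)*l*((v+u)^(m+4) - v^(m+4) - (m+4:ℂ)*v^(m+3)*u)‖
        = (M+5) * t * ‖(v+u)^(m+4) - v^(m+4) - (m+4:ℂ)*v^(m+3)*u‖ := by
      rw [norm_mul, norm_mul, hcast5, ht_def]
    rw [t3] at t2
    linarith [t1, t2, habs_last]
  have hpow38 : (2:ℝ)^(m+8) = 2^(m+5) * 8 := by
    rw [show m+8 = (m+5)+3 by omega, pow_add]; norm_num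
  have hpow26 : (2:ℝ)^(m+6) = 2^(m+4) * 4 := by
    rw [show m+6 = (m+4)+2 by omega, pow_add]; norm_num
  have hu3 : ‖u‖ ^ 3 ≤ (2*t)^3 := pow_le_pow_left₀ (norm_nonneg u) hu2 3
  have hu2' : ‖u‖ ^ 2 ≤ (2*t)^2 := pow_le_pow_left₀ (norm_nonneg u) hu2 2
  have hp5 : (0:ℝ) < 2^(m+5) := by positivity
  have hp4 : (0:ℝ) < 2^(m+4) := by positivity
  have hGw₀ : ‖Polynomial.eval w₀ G‖ ≤ Kc m * t^3 := by
    have b1 : ‖(v+u)^(m+5) - v^(m+5) - (m+5:ℂ)*v^(m+4)*u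
        - ((m+5:ℂ)*(m+4)/2)*v^(m+3)*u^2‖ ≤ 2^(m+8) * t^3 := by
      calc _ ≤ 2^(m+5) * ‖u‖ ^ 3 := hEa
        _ ≤ 2^(m+5) * (2*t)^3 := by nlinarith [hu3, hp5]
        _ = 2^(m+8) * t^3 := by rw [hpow38]; ring
    have b2 : ‖(v+u)^(m+4) - v^(m+4) - (m+4:ℂ)*v^(m+3)*u‖ ≤ 2^(m+6) * t^2 := by
      calc _ ≤ 2^(m+4) * ‖u‖ ^ 2 := hEb
        _ ≤ 2^(m+4) * (2*t)^2 := by nlinarith [hu2', hp4]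
        _ = 2^(m+6) * t^2 := by rw [hpow26]; ring
    have hKc : Kc m = 2^(m+8) + (M+5) * 2^(m+6) + (M+5)^4 := by
      unfold Kc; rw [hM_def]
    rw [hKc]
    have hM5 : (0:ℝ) < M + 5 := by linarith
    have ht34 : t^4 ≤ t^3 := by
      calc t^4 = t^3 * t := by ring
        _ ≤ t^3 * 1 := by nlinarith [pow_pos ht0 3]
        _ = t^3 := by ring
    have ht4 : (M+5)^4 * t^4 ≤ (M+5)^4 * t^3 := mul_le_mul_of_nonneg_left ht34 (by positivity)
    nlinarith [htri, b1, b2, mul_le_mul_of_nonneg_left b2 (le_of_lt (by positivity : (0:ℝ) < (M+5)*t)), ht4]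
  -- lower bound |G'(w₀)|
  have hlow_v : ∀ x : ℂ, 1 - ‖x‖ ≤ ‖v + x‖ := by
    intro x
    have h1 : ‖v‖ ≤ ‖v + x‖ + ‖x‖ := by
      have := habs_sub (v + x) x
      simpa using this
    rw [habsv] at h1; linarith
  have hw₀low : 1 - 2*t ≤ ‖w₀‖ := by
    have := hlow_v u
    rw [← hw₀_def] at this
    linarith [hu2]
  have hsmall1 : 2*((m:ℝ)+3)*t ≤ 1/2 := by
    have : ((m:ℝ)+3) * t ≤ (M+5) * t := by nlinarith [ht0]
    nlinarith [htn]
  have hsmall2 : (2 + (M+4))*t ≤ 1/2 := by nlinarith [htn, ht0]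
  have ht2 : 2*t ≤ 1 := by linarith [ht8]
  have hw₀3 : (1-2*t)^(m+3) ≤ ‖w₀‖ ^ (m+3) :=
    pow_le_pow_left₀ (by linarith) hw₀low _
  have hBern : 1 - 2*((m:ℝ)+3)*t ≤ (1-2*t)^(m+3) := by
    have h := one_add_mul_le_pow (a := -2*t) (by linarith) (m+3)
    have e : (1 + (-2*t)) = 1 - 2*t := by ring
    rw [e] at h
    calc 1 - 2*((m:ℝ)+3)*t = 1 + ((m:ℕ)+3 : ℝ) * (-2*t) := by push_cast; ring
      _ ≤ (1-2*t)^(m+3) := by exact_mod_cast h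
  have hwl : 1/2 ≤ ‖w₀ - (m+4:ℂ)*l‖ := by
    have he : w₀ - (m+4:ℂ)*l = v + (u - (m+4:ℂ)*l) := by rw [hw₀_def]; ring
    rw [he]
    have h1 := hlow_v (u - (m+4:ℂ)*l)
    have h2 : ‖u - (m+4:ℂ)*l‖ ≤ 2*t + (M+4)*t := by
      have := habs_sub u ((m+4:ℂ)*l)
      have e3 : ‖(m+4:ℂ)*l‖ = (M+4)*t := by
        rw [norm_mul]
        have e4 : ((m:ℂ)+4) = ((m+4:ℕ):ℂ) := by push_cast; ring
        rw [e4, Complex.norm_natCast, ht_def]; push_cast; ring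
      rw [e3] at this
      linarith [hu2]
    nlinarith [h1, h2, hsmall2]
  have hG'low : ((M:ℝ)+5)/4 ≤ ‖Polynomial.eval w₀ (Polynomial.derivative G)‖ := by
    rw [hG'eval w₀, norm_mul, norm_mul, norm_pow, hcast5]
    have hhalf : 1/2 ≤ ‖w₀‖ ^ (m+3) := by linarith [hw₀3, hBern, hsmall1]
    have hM5 : (0:ℝ) < M + 5 := by linarith
    calc (M+5)/4 = (M+5) * (1/2) * (1/2) := by ring
      _ ≤ (M+5) * ‖w₀‖ ^ (m+3) * ‖w₀ - (m+4:ℂ)*l‖ := by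
        apply mul_le_mul
        · apply mul_le_mul_of_nonneg_left hhalf (le_of_lt hM5)
        · exact hwl
        · norm_num
        · positivity
  have hG'ne : Polynomial.eval w₀ (Polynomial.derivative G) ≠ 0 := by
    intro hzero
    rw [hzero] at hG'low
    simp at hG'low
    linarith [hG'low]
  obtain ⟨w, hwroot, hwdist⟩ := exists_root_near G hmonic (m+5) (by omega) hdeg w₀ hG'ne
  refine ⟨w, ?_, ?_⟩
  · have := hwroot
    rw [Polynomial.IsRoot] at this
    rw [hGeval w] at this
    exact this
  · have hdd : (m+5:ℝ) * ‖Polynomial.eval w₀ G‖ /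
        ‖Polynomial.eval w₀ (Polynomial.derivative G)‖ ≤ 4 * Kc m * t^3 := by
      have hnum : (m+5:ℝ) * ‖Polynomial.eval w₀ G‖ ≤ (M+5) * (Kc m * t^3) := by
        have : ((m+5:ℕ):ℝ) = M + 5 := by push_cast; ring
        nlinarith [hGw₀, hM]
      have hMpos : (0:ℝ) < (M+5)/4 := by linarith
      calc (m+5:ℝ) * ‖Polynomial.eval w₀ G‖ /
            ‖Polynomial.eval w₀ (Polynomial.derivative G)‖
          ≤ (M+5) * (Kc m * t^3) / ((M+5)/4) := by
            apply div_le_div₀ (by positivity) hnum hMpos hG'low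
        _ = 4 * Kc m * t^3 := by field_simp
    have hcomm : ‖w - w₀‖ = ‖w₀ - w‖ := by
      rw [show w - w₀ = -(w₀ - w) by ring, norm_neg]
    rw [hcomm]
    push_cast at hwdist
    exact le_trans hwdist hdd

lemma habs_sub' (a b : ℂ) : ‖a - b‖ ≤ ‖a‖ + ‖b‖ := by
  rw [sub_eq_add_neg]
  calc ‖a + -b‖ ≤ ‖a‖ + ‖-b‖ := norm_add_le _ _
    _ = ‖a‖ + ‖b‖ := by rw [norm_neg]

set_option maxHeartbeats 1000000 in
theorem roots_of_unity_incomparable (n : ℕ) (hn : 5 ≤ n) :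
    ∃ ε > (0 : ℝ), ∀ l : ℂ, l ≠ 0 → ‖l‖ < ε →
      (∃ z : ℂ,
        (((X : Polynomial ℂ) ^ n - 1).comp (X + C l) -
          C l * (Polynomial.derivative ((X : Polynomial ℂ) ^ n - 1)).comp (X + C l)).IsRoot z ∧
        1 < ‖z‖) ∧
      (∃ z : ℂ,
        (((X : Polynomial ℂ) ^ n - 1).comp (X + C l) -
          C l * (Polynomial.derivative ((X : Polynomial ℂ) ^ n - 1)).comp (X + C l)).IsRoot z ∧
        ‖z‖ < 1) := by
  obtain ⟨m, hm⟩ : ∃ m, n = m + 5 := ⟨n - 5, by omega⟩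
  subst hm
  have hKpos : (0:ℝ) < Kc m := by
    unfold Kc; positivity
  have hden : (0:ℝ) < 8 * Kc m + 8 * (m+5) + 8 := by positivity
  refine ⟨1 / (8 * Kc m + 8 * (m+5) + 8), by positivity, ?_⟩
  intro l hl hlt
  set t := ‖l‖ with ht_def
  have ht0 : 0 < t := by simpa [ht_def, norm_pos_iff] using hl
  have htK : 8 * Kc m * t < 1 := by
    rw [lt_div_iff₀ hden] at hlt
    nlinarith
  have htn : 8 * ((m:ℝ)+5) * t < 1 := by
    rw [lt_div_iff₀ hden] at hlt
    nlinarith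
  have ht1 : t ≤ 1 := by nlinarith
  set μ := l^2 with hμ_def
  have hμ : μ ≠ 0 := pow_ne_zero _ hl
  have habsμ : ‖μ‖ = t^2 := by rw [hμ_def, norm_pow, ht_def]
  obtain ⟨⟨va, hva, hvaRe⟩, ⟨vb, hvb, hvbRe⟩⟩ := exists_dirs (m+5) (by omega) μ hμ
  rw [habsμ] at hvaRe hvbRe
  -- root of the statement polynomial ↔ equation
  have hisroot : ∀ w : ℂ, (w ^ (m+5) - (m+5 : ℂ) * l * w ^ (m+4) - 1 = 0) →
      (((X : Polynomial ℂ) ^ (m+5) - 1).comp (X + C l) -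
        C l * (Polynomial.derivative ((X : Polynomial ℂ) ^ (m+5) - 1)).comp (X + C l)).IsRoot
        (w - l) := by
    intro w hw
    simp only [IsRoot, derivative_sub, derivative_one, derivative_X_pow, sub_zero, eval_sub,
      eval_comp, eval_add, eval_X, eval_C, eval_pow, eval_one, eval_mul, eval_natCast]
    have e : m + 5 - 1 = m + 4 := by omega
    rw [e]
    push_cast
    linear_combination hw
  -- generic geometric setup for a direction v
  have hmain : ∀ v : ℂ, v ^ (m+5) = 1 →
      ∃ w : ℂ, (w ^ (m+5) - (m+5 : ℂ) * l * w ^ (m+4) - 1 = 0) ∧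
        ∃ z : ℂ, ‖z‖ = 1 ∧
        ‖w - (z * (1 + ((m+4:ℂ)/2) * v^2 * l^2) + l)‖ ≤ 4 * Kc m * t^3 := by
    intro v hv
    set z := v ^ (m+4) with hz_def
    have hz : z ^ (m+5) = 1 := by
      rw [hz_def, ← pow_mul, mul_comm, pow_mul, hv, one_pow]
    have hzz : z ^ (m+4) = v := by
      rw [hz_def, ← pow_mul, show (m+4)*(m+4) = (m+5)*(m+3)+1 by ring, pow_add, pow_mul, hv,
        one_pow, one_mul, pow_one]
    have hzv : z * v^2 = v := by
      rw [hz_def, show v^(m+4) * v^2 = v^(m+5) * v by ring, hv, one_mul]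
    have hfact : z + ((m+4:ℂ)/2) * v * l^2 = z * (1 + ((m+4:ℂ)/2) * v^2 * l^2) := by
      linear_combination (-((m+4:ℂ)/2) * l^2) * hzv
    obtain ⟨w, hweq, hwdist⟩ := root_near m l hl (by rw [← ht_def]; exact hlt) z hz
    rw [hzz] at hwdist
    refine ⟨w, hweq, z, abs_eq_one_of_pow (m+4) z hz, ?_⟩
    have e2 : z * (1 + ((m+4:ℂ)/2) * v^2 * l^2) + l = z + (l + ((m+4 : ℂ)/2) * v * l^2) := by
      rw [← hfact]; ring
    rw [e2]
    exact hwdist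
  set M := (m:ℝ) with hM_def
  have hM : (0:ℝ) ≤ M := Nat.cast_nonneg m
  -- real part computation
  have hre : ∀ v : ℂ, (((m+4:ℂ)/2) * v^2 * l^2).re = ((M+4)/2) * (v^2*μ).re := by
    intro v
    have e : ((m+4:ℂ)/2) * v^2 * l^2 = ((((M+4)/2 : ℝ)):ℂ) * (v^2*μ) := by
      rw [hμ_def, hM_def]; push_cast; ring
    rw [e]
    simp [Complex.mul_re]
  have habs_xi : ∀ v : ℂ, ‖v‖ = 1 →
      ‖((m+4:ℂ)/2) * v^2 * l^2‖ = (M+4)/2 * t^2 := by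
    intro v hv1
    rw [norm_mul, norm_mul, norm_pow, norm_pow, hv1, one_pow, mul_one, ← ht_def]
    congr 1
    rw [norm_div]
    have e4 : ((m:ℂ)+4) = ((m+4:ℕ):ℂ) := by push_cast; ring
    rw [e4, Complex.norm_natCast]
    push_cast [hM_def]
    norm_num
  have habsva : ‖va‖ = 1 := abs_eq_one_of_pow (m+4) va hva
  have habsvb : ‖vb‖ = 1 := abs_eq_one_of_pow (m+4) vb hvb
  constructor
  -- case > 1
  · obtain ⟨w, hweq, z, hzabs, hwdist⟩ := hmain va hva
    refine ⟨w - l, hisroot w hweq, ?_⟩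
    set ξ := ((m+4:ℂ)/2) * va^2 * l^2 with hξ_def
    have hreξ : t^2 ≤ ξ.re := by
      rw [hξ_def, hre va]
      nlinarith [hvaRe, hM, ht0]
    have hlow : 1 + ξ.re ≤ ‖z * (1 + ξ)‖ := by
      rw [norm_mul, hzabs, one_mul]
      calc 1 + ξ.re = (1 + ξ).re := by simp
        _ ≤ ‖1 + ξ‖ := Complex.re_le_norm _
    have htri : ‖z * (1 + ξ)‖ ≤ ‖w - l‖ + ‖w - (z * (1 + ξ) + l)‖ := by
      calc ‖z * (1 + ξ)‖ = ‖(w - l) - (w - (z * (1 + ξ) + l))‖ := by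
            congr 1; ring
        _ ≤ _ := habs_sub' _ _
    have h4K : 4 * Kc m * t^3 < t^2 := by nlinarith [htK, pow_pos ht0 2, pow_pos ht0 3]
    nlinarith [hlow, htri, hreξ, hwdist, h4K]
  -- case < 1
  · obtain ⟨w, hweq, z, hzabs, hwdist⟩ := hmain vb hvb
    refine ⟨w - l, hisroot w hweq, ?_⟩
    set ξ := ((m+4:ℂ)/2) * vb^2 * l^2 with hξ_def
    have hreξ : ξ.re ≤ -(t^2) := by
      rw [hξ_def, hre vb]
      nlinarith [hvbRe, hM, ht0]
    have habsξ : ‖ξ‖ ≤ (M+5) * t^2 := by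
      rw [hξ_def, habs_xi vb habsvb]
      nlinarith [pow_pos ht0 2]
    have hMt : (M+5) * t ≤ 1/8 := by nlinarith [htn]
    have hnsq : ‖1 + ξ‖^2 = 1 + 2*ξ.re + ‖ξ‖^2 := by
      rw [Complex.sq_norm, Complex.sq_norm, Complex.normSq_add, Complex.normSq_one]
      have e1 : ((1:ℂ) * (starRingEnd ℂ) ξ).re = ξ.re := by
        rw [one_mul, Complex.conj_re]
      rw [e1]; ring
    have hMt2 : ((M+5)*t)^2 ≤ (1/8)^2 := by
      nlinarith [hMt, mul_nonneg (by linarith : (0:ℝ) ≤ M+5) (le_of_lt ht0)]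
    have h1 : ‖ξ‖^2 ≤ ((M+5)*t^2)^2 :=
      pow_le_pow_left₀ (norm_nonneg ξ) habsξ 2
    have habsξ2 : ‖ξ‖^2 ≤ t^2/64 := by
      nlinarith [h1, mul_le_mul_of_nonneg_right hMt2 (le_of_lt (pow_pos ht0 2))]
    have hup2 : ‖1 + ξ‖^2 ≤ 1 - t^2 := by
      rw [hnsq]
      nlinarith [hreξ, habsξ2, pow_pos ht0 2]
    have hb : (0:ℝ) ≤ 1 - t^2/2 := by nlinarith
    have hup : ‖1+ξ‖ ≤ 1 - t^2/2 := by
      apply le_of_pow_le_pow_left₀ (n := 2) (by norm_num) hb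
      calc ‖1+ξ‖^2 ≤ 1 - t^2 := hup2
        _ ≤ (1 - t^2/2)^2 := by nlinarith [sq_nonneg t]
    have htri2 : ‖w - l‖ ≤ ‖z*(1+ξ)‖ + ‖w - (z*(1+ξ)+l)‖ := by
      calc ‖w - l‖ = ‖(z*(1+ξ)) + (w - (z*(1+ξ)+l))‖ := by
            congr 1; ring
        _ ≤ _ := norm_add_le _ _
    have hzlow : ‖z*(1+ξ)‖ = ‖1+ξ‖ := by
      rw [norm_mul, hzabs, one_mul]
    have h4K : 4 * Kc m * t^3 < t^2/2 := by nlinarith [htK, pow_pos ht0 2, pow_pos ht0 3]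
    rw [hzlow] at htri2
    nlinarith [htri2, hup, hwdist, h4K, pow_pos ht0 2]
end

section
/- Let P₁, P₂ be monic hyperbolic polynomials of degree n with roots x_1 ≤ … ≤ x_n and y_1 ≤ … ≤ y_n respectively. If max(x_i, y_i) ≤ min(x_{i+1}, y_{i+1}) for all 1 ≤ i ≤ n−1, then (1−α)P₁ + αP₂ is hyperbolic for every α ∈ [0,1]. -/
open Polynomial
/-- deletion of index `p` from a sequence -/
def SH.del (x : ℕ → ℝ) (p : ℕ) (i : ℕ) : ℝ := if i < p then x i else x (i+1)

lemma SH.prod_del (x : ℕ → ℝ) (n p : ℕ) (hp : p < n) :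
    ∏ i ∈ Finset.range n, (X - C (x i)) =
      (X - C (x p)) * ∏ i ∈ Finset.range (n-1), (X - C (SH.del x p i)) := by
  have hp' : p ≤ n - 1 := by omega
  rw [← Finset.prod_range_mul_prod_Ico (fun i => (X - C (SH.del x p i))) hp']
  have h1 : ∏ i ∈ Finset.range p, (X - C (SH.del x p i))
      = ∏ i ∈ Finset.range p, (X - C (x i)) := by
    apply Finset.prod_congr rfl; intro i hi
    simp only [SH.del, if_pos (Finset.mem_range.mp hi)]
  have h2 : ∏ i ∈ Finset.Ico p (n-1), (X - C (SH.del x p i))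
      = ∏ i ∈ Finset.Ico (p+1) n, (X - C (x i)) := by
    rw [Finset.prod_Ico_eq_prod_range, Finset.prod_Ico_eq_prod_range]
    have hc : n - 1 - p = n - (p+1) := by omega
    rw [hc]
    apply Finset.prod_congr rfl; intro i _
    have : ¬ (p + i < p) := by omega
    simp only [SH.del, if_neg this]
    ring_nf
  rw [h1, h2, ← Finset.prod_range_mul_prod_Ico (fun i => (X - C (x i))) (Nat.succ_le_of_lt hp),
    Finset.prod_range_succ]
  ring

lemma SH.sign_helper (n k : ℕ) (x : ℕ → ℝ) (t : ℝ) (hk : k ≤ n)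
    (hle : ∀ j, j < k → x j ≤ t) (hge : ∀ j, k ≤ j → j < n → t ≤ x j) :
    0 ≤ (-1:ℝ)^(n-k) * ∏ j ∈ Finset.range n, (t - x j) := by
  rw [← Finset.prod_range_mul_prod_Ico (fun j => (t - x j)) hk]
  have h2 : ∏ j ∈ Finset.Ico k n, (t - x j)
      = (-1:ℝ)^(n-k) * ∏ j ∈ Finset.Ico k n, (x j - t) := by
    rw [← Nat.card_Ico k n, ← Finset.prod_const, ← Finset.prod_mul_distrib]
    apply Finset.prod_congr rfl; intro j _; ring
  rw [h2]
  have hsq : (-1:ℝ)^(n-k) * (-1:ℝ)^(n-k) = 1 := by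
    rw [← pow_add]; exact Even.neg_one_pow ⟨n-k, rfl⟩
  have e : (-1:ℝ)^(n-k) * ((∏ j ∈ Finset.range k, (t - x j)) *
      ((-1:ℝ)^(n-k) * ∏ j ∈ Finset.Ico k n, (x j - t)))
      = (∏ j ∈ Finset.range k, (t - x j)) * ∏ j ∈ Finset.Ico k n, (x j - t) := by
    rw [show ∀ a b c : ℝ, a * (b * (a * c)) = (a*a) * (b * c) by intros; ring, hsq, one_mul]
  rw [e]
  apply mul_nonneg
  · exact Finset.prod_nonneg fun j hj => sub_nonneg.mpr (hle j (Finset.mem_range.mp hj))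
  · exact Finset.prod_nonneg fun j hj => sub_nonneg.mpr
      (hge j (Finset.mem_Ico.mp hj).1 (Finset.mem_Ico.mp hj).2)

lemma SH.roots_prod (n : ℕ) (x : ℕ → ℝ) :
    (∏ i ∈ Finset.range n, (X - C (x i))).roots = (Finset.range n).val.map x := by
  rw [Finset.prod_eq_multiset_prod]
  have : Multiset.map (fun i => X - C (x i)) (Finset.range n).val
      = Multiset.map (fun a => X - C a) (Multiset.map x (Finset.range n).val) := by
    rw [Multiset.map_map]; rfl
  rw [this, roots_multiset_prod_X_sub_C]

lemma SH.roots_prod_card (n : ℕ) (x : ℕ → ℝ) :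
    (∏ i ∈ Finset.range n, (X - C (x i))).roots.card = n := by
  rw [SH.roots_prod]; simp

lemma SH.natDegree_prodXC (n : ℕ) (x : ℕ → ℝ) :
    (∏ i ∈ Finset.range n, (X - C (x i))).natDegree = n := by
  rw [Polynomial.natDegree_prod]
  · simp
  · intro i _; exact X_sub_C_ne_zero _

lemma SH.monic_prod (n : ℕ) (x : ℕ → ℝ) :
    (∏ i ∈ Finset.range n, (X - C (x i))).Monic :=
  monic_prod_of_monic _ _ fun i _ => monic_X_sub_C _

lemma SH.Q_natDegree (n : ℕ) (x y : ℕ → ℝ) (α : ℝ) :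
    (C (1 - α) * ∏ i ∈ Finset.range n, (X - C (x i))
      + C α * ∏ i ∈ Finset.range n, (X - C (y i))).natDegree = n
    ∧ (C (1 - α) * ∏ i ∈ Finset.range n, (X - C (x i))
      + C α * ∏ i ∈ Finset.range n, (X - C (y i))) ≠ 0 := by
  set P₁ := ∏ i ∈ Finset.range n, (X - C (x i)) with hP1
  set P₂ := ∏ i ∈ Finset.range n, (X - C (y i)) with hP2
  have hc : (C (1 - α) * P₁ + C α * P₂).coeff n = 1 := by
    rw [coeff_add, coeff_C_mul, coeff_C_mul]
    rw [show P₁.coeff n = 1 from by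
      have := (SH.monic_prod n x).coeff_natDegree
      rwa [SH.natDegree_prodXC] at this]
    rw [show P₂.coeff n = 1 from by
      have := (SH.monic_prod n y).coeff_natDegree
      rwa [SH.natDegree_prodXC] at this]
    ring
  have hne : (C (1 - α) * P₁ + C α * P₂) ≠ 0 := by
    intro h; rw [h, coeff_zero] at hc; norm_num at hc
  constructor
  · refine le_antisymm ?_ (le_natDegree_of_ne_zero (by rw [hc]; norm_num))
    refine le_trans (natDegree_add_le _ _) (max_le ?_ ?_)
    · exact le_trans (natDegree_C_mul_le _ _) (le_of_eq (SH.natDegree_prodXC n x))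
    · exact le_trans (natDegree_C_mul_le _ _) (le_of_eq (SH.natDegree_prodXC n y))
  · exact hne

lemma SH.chain {n : ℕ} {x y : ℕ → ℝ}
    (hinter : ∀ i, i + 1 < n → max (x i) (y i) ≤ min (x (i + 1)) (y (i + 1))) :
    ∀ q p, p < q → q < n → max (x p) (y p) ≤ min (x q) (y q) := by
  intro q
  induction q with
  | zero => omega
  | succ q ih =>
    intro p hpq hq
    rcases Nat.lt_or_ge p q with h | h
    · exact le_trans (le_trans (ih p h (by omega)) (le_trans (min_le_max) le_rfl))
        (hinter q hq) |>.trans le_rfl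
    · have : p = q := by omega
      subst this; exact hinter p hq

lemma SH.del_mono {n : ℕ} {x : ℕ → ℝ} {p : ℕ} (hp : p < n)
    (hx : ∀ i j, i ≤ j → j < n → x i ≤ x j) :
    ∀ i j, i ≤ j → j < n - 1 → SH.del x p i ≤ SH.del x p j := by
  intro i j hij hj
  unfold SH.del
  split_ifs with h1 h2 h2 <;>
    first
      | exact hx i j hij (by omega)
      | exact hx i (j+1) (by omega) (by omega)
      | exact hx (i+1) (j+1) (by omega) (by omega)
      | omega

lemma SH.del_inter_aligned {n : ℕ} {x y : ℕ → ℝ} {p : ℕ} (hp : p < n)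
    (hinter : ∀ i, i + 1 < n → max (x i) (y i) ≤ min (x (i + 1)) (y (i + 1))) :
    ∀ i, i + 1 < n - 1 →
      max (SH.del x p i) (SH.del y p i) ≤ min (SH.del x p (i+1)) (SH.del y p (i+1)) := by
  intro i hi
  unfold SH.del
  split_ifs with h1 h2 h2
  · exact hinter i (by omega)
  · -- i < p, ¬ i+1 < p  so i+1 = p or i+1 > p; since i < p, i+1 ≤ p so i+1 = p
    have : i + 1 = p := by omega
    subst this
    exact SH.chain hinter (i+2) i (by omega) (by omega)
  · omega
  · exact hinter (i+1) (by omega)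

lemma SH.del_inter_cross {n : ℕ} {x y : ℕ → ℝ} {p : ℕ} (hp : p + 1 < n)
    (hinter : ∀ i, i + 1 < n → max (x i) (y i) ≤ min (x (i + 1)) (y (i + 1))) :
    ∀ i, i + 1 < n - 1 →
      max (SH.del x p i) (SH.del y (p+1) i) ≤
        min (SH.del x p (i+1)) (SH.del y (p+1) (i+1)) := by
  intro i hi
  unfold SH.del
  rcases Nat.lt_trichotomy (i+1) p with h | h | h
  · rw [if_pos (by omega : i < p), if_pos (by omega : i < p + 1),
      if_pos h, if_pos (by omega : i + 1 < p + 1)]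
    exact hinter i (by omega)
  · -- i + 1 = p
    rw [if_pos (by omega : i < p), if_pos (by omega : i < p + 1),
      if_neg (by omega : ¬ i + 1 < p), if_pos (by omega : i + 1 < p + 1)]
    -- goal: max (x i) (y i) ≤ min (x (i+2)) (y (i+1))  with i+1 = p
    have h1 := hinter i (by omega)
    have h2 := hinter (i+1) (by omega)
    subst h
    simp only [le_min_iff, max_le_iff] at *
    refine ⟨⟨?_, ?_⟩, ?_, ?_⟩ <;> [skip; skip; skip; skip] <;>
      first
        | linarith [h1.1.1, h1.1.2, h1.2.1, h1.2.2, h2.1.1, h2.1.2, h2.2.1, h2.2.2]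
  · rcases Nat.lt_trichotomy i p with h' | h' | h'
    · omega
    · -- i = p
      subst h'
      rw [if_neg (by omega : ¬ i < i), if_pos (by omega : i < i + 1),
        if_neg (by omega : ¬ i + 1 < i), if_neg (by omega : ¬ i + 1 < i + 1)]
      -- goal: max (x (i+1)) (y i) ≤ min (x (i+2)) (y (i+2))
      have h1 := hinter (i+1) (by omega)
      have h2 := SH.chain hinter (i+2) i (by omega) (by omega)
      simp only [le_min_iff, max_le_iff] at *
      refine ⟨⟨?_, ?_⟩, ?_, ?_⟩ <;>
        linarith [h1.1.1, h1.1.2, h1.2.1, h1.2.2, h2.1.1, h2.1.2, h2.2.1, h2.2.2]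
    · rw [if_neg (by omega : ¬ i < p), if_neg (by omega : ¬ i < p + 1),
        if_neg (by omega : ¬ i + 1 < p), if_neg (by omega : ¬ i + 1 < p + 1)]
      exact hinter (i+1) (by omega)

lemma SH.normalize {n j k : ℕ} {x y : ℕ → ℝ}
    (hinter : ∀ i, i + 1 < n → max (x i) (y i) ≤ min (x (i + 1)) (y (i + 1)))
    (hj : j < n) (hk : k < n) (hjk : x j = y k) :
    ∃ p q, p < n ∧ q < n ∧ x p = y q ∧ (q = p ∨ q = p + 1 ∨ p = q + 1) := by
  rcases Nat.lt_trichotomy j k with h | h | h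
  · rcases Nat.eq_or_lt_of_le (Nat.succ_le_of_lt h) with h' | h'
    · exact ⟨j, k, hj, hk, hjk, Or.inr (Or.inl h'.symm)⟩
    · -- k ≥ j + 2 : squeeze x (j+1) = y (j+1)
      have c1 : max (x j) (y j) ≤ min (x (j+1)) (y (j+1)) := hinter j (by omega)
      have c2 : max (x (j+1)) (y (j+1)) ≤ min (x k) (y k) :=
        SH.chain hinter k (j+1) (by omega) hk
      simp only [le_min_iff, max_le_iff] at c1 c2
      have e1 : x (j+1) = x j := le_antisymm
        (by linarith [c2.1.1, c2.1.2, c2.2.1, c2.2.2]) (by linarith [c1.1.1, c1.1.2, c1.2.1, c1.2.2])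
      have e2 : y (j+1) = x j := le_antisymm
        (by linarith [c2.1.1, c2.1.2, c2.2.1, c2.2.2]) (by linarith [c1.1.1, c1.1.2, c1.2.1, c1.2.2])
      exact ⟨j+1, j+1, by omega, by omega, by rw [e1, e2], Or.inl rfl⟩
  · exact ⟨j, k, hj, hk, hjk, Or.inl h.symm⟩
  · rcases Nat.eq_or_lt_of_le (Nat.succ_le_of_lt h) with h' | h'
    · exact ⟨j, k, hj, hk, hjk, Or.inr (Or.inr h'.symm)⟩
    · have c1 : max (x k) (y k) ≤ min (x (k+1)) (y (k+1)) := hinter k (by omega)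
      have c2 : max (x (k+1)) (y (k+1)) ≤ min (x j) (y j) :=
        SH.chain hinter j (k+1) (by omega) hj
      simp only [le_min_iff, max_le_iff] at c1 c2
      have e1 : x (k+1) = y k := le_antisymm
        (by linarith [c2.1.1, c2.1.2, c2.2.1, c2.2.2]) (by linarith [c1.1.1, c1.1.2, c1.2.1, c1.2.2])
      have e2 : y (k+1) = y k := le_antisymm
        (by linarith [c2.1.1, c2.1.2, c2.2.1, c2.2.2]) (by linarith [c1.1.1, c1.1.2, c1.2.1, c1.2.2])
      exact ⟨k+1, k+1, by omega, by omega, by rw [e1, e2], Or.inl rfl⟩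

lemma SH.eval_prodXC (n : ℕ) (x : ℕ → ℝ) (t : ℝ) :
    (∏ i ∈ Finset.range n, (X - C (x i))).eval t = ∏ i ∈ Finset.range n, (t - x i) := by
  simp [eval_prod]

lemma SH.exists_root (Q : ℝ[X]) (a b : ℝ) (hab : a ≤ b) (s : ℝ) (hs : s ≠ 0)
    (h1 : s * Q.eval a ≤ 0) (h2 : 0 ≤ s * Q.eval b) :
    ∃ t ∈ Set.Icc a b, Q.eval t = 0 := by
  have hcont : ContinuousOn (fun t => s * Q.eval t) (Set.Icc a b) :=
    (continuous_const.mul (Polynomial.continuous_aeval Q)).continuousOn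
  have := intermediate_value_Icc hab hcont
  have h0 : (0:ℝ) ∈ Set.Icc (s * Q.eval a) (s * Q.eval b) := ⟨h1, h2⟩
  obtain ⟨t, ht, hte⟩ := this h0
  exact ⟨t, ht, by
    have : s * Q.eval t = 0 := hte
    rcases mul_eq_zero.mp this with h | h
    · exact absurd h hs
    · exact h⟩

theorem SH.main (n : ℕ) : ∀ x y : ℕ → ℝ,
    (∀ i j, i ≤ j → j < n → x i ≤ x j) →
    (∀ i j, i ≤ j → j < n → y i ≤ y j) →
    (∀ i, i + 1 < n → max (x i) (y i) ≤ min (x (i + 1)) (y (i + 1))) →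
    ∀ α : ℝ, 0 ≤ α → α ≤ 1 →
    (C (1 - α) * ∏ i ∈ Finset.range n, (X - C (x i))
      + C α * ∏ i ∈ Finset.range n, (X - C (y i))).roots.card = n := by
  induction n using Nat.strong_induction_on with
  | _ n IH =>
  intro x y hx hy hinter α hα0 hα1
  rcases eq_or_lt_of_le hα0 with h0 | h0
  · rw [← h0]
    simp only [sub_zero, map_one, one_mul, map_zero, zero_mul, add_zero]
    exact SH.roots_prod_card n x
  rcases eq_or_lt_of_le hα1 with h1 | h1
  · rw [h1]
    simp only [sub_self, map_zero, zero_mul, map_one, one_mul, zero_add]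
    exact SH.roots_prod_card n y
  by_cases hcom : ∃ j k, j < n ∧ k < n ∧ x j = y k
  · -- common root case
    obtain ⟨j, k, hj, hk, hjk⟩ := hcom
    obtain ⟨p, q, hp, hq, hpq, hcase⟩ := SH.normalize hinter hj hk hjk
    have hfx := SH.prod_del x n p hp
    have hfy := SH.prod_del y n q hq
    set P₁' := ∏ i ∈ Finset.range (n-1), (X - C (SH.del x p i)) with hP1'
    set P₂' := ∏ i ∈ Finset.range (n-1), (X - C (SH.del y q i)) with hP2'
    have hQ : C (1 - α) * (∏ i ∈ Finset.range n, (X - C (x i)))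
        + C α * (∏ i ∈ Finset.range n, (X - C (y i)))
        = (X - C (x p)) * (C (1 - α) * P₁' + C α * P₂') := by
      rw [hfx, hfy, ← hpq]; ring
    have hsmall : (C (1 - α) * P₁' + C α * P₂').roots.card = n - 1 := by
      rcases hcase with hc1 | hc2 | hc3
      · subst hc1
        exact IH (n-1) (by omega) _ _ (SH.del_mono hp hx) (SH.del_mono hp hy)
          (SH.del_inter_aligned hp hinter) α hα0 hα1
      · subst hc2
        exact IH (n-1) (by omega) _ _ (SH.del_mono hp hx) (SH.del_mono hq hy)
          (SH.del_inter_cross hq hinter) α hα0 hα1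
      · subst hc3
        have hinter' : ∀ i, i + 1 < n → max (y i) (x i) ≤ min (y (i + 1)) (x (i + 1)) :=
          fun i h => by rw [max_comm, min_comm]; exact hinter i h
        have := IH (n-1) (by omega) (SH.del y q) (SH.del x (q+1))
          (SH.del_mono hq hy) (SH.del_mono hp hx)
          (SH.del_inter_cross hp hinter') (1 - α) (by linarith) (by linarith)
        rw [show (1:ℝ) - (1 - α) = α by ring] at this
        rw [← this]
        congr 1
        rw [add_comm]
    have hne : (C (1 - α) * P₁' + C α * P₂') ≠ 0 :=
      (SH.Q_natDegree (n-1) (SH.del x p) (SH.del y q) α).2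
    rw [hQ, roots_mul (mul_ne_zero (X_sub_C_ne_zero _) hne), roots_X_sub_C,
      Multiset.card_add, hsmall]
    simp only [Multiset.card_singleton]
    omega
  · -- no common root : n distinct roots
    set Q := C (1 - α) * (∏ i ∈ Finset.range n, (X - C (x i)))
        + C α * (∏ i ∈ Finset.range n, (X - C (y i))) with hQdef
    obtain ⟨hdeg, hQne⟩ := SH.Q_natDegree n x y α
    have evalQ : ∀ t : ℝ, Q.eval t
        = (1 - α) * (∏ j ∈ Finset.range n, (t - x j))
          + α * (∏ j ∈ Finset.range n, (t - y j)) := by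
      intro t
      simp only [hQdef, eval_add, eval_mul, eval_C, SH.eval_prodXC]
    have sgnx : ∀ i, i < n →
        0 ≤ (-1:ℝ)^(n-1-i) * ∏ j ∈ Finset.range n, (max (x i) (y i) - x j) := by
      intro i hi
      have := SH.sign_helper n (i+1) x (max (x i) (y i)) (by omega)
        (fun j hj => le_trans (hx j i (by omega) hi) (le_max_left _ _))
        (fun j hj1 hj2 => le_trans (hinter i (by omega))
          (le_trans (min_le_left _ _) (hx (i+1) j hj1 hj2)))
      rwa [show n - (i+1) = n - 1 - i by omega] at this
    have sgny : ∀ i, i < n →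
        0 ≤ (-1:ℝ)^(n-1-i) * ∏ j ∈ Finset.range n, (max (x i) (y i) - y j) := by
      intro i hi
      have := SH.sign_helper n (i+1) y (max (x i) (y i)) (by omega)
        (fun j hj => le_trans (hy j i (by omega) hi) (le_max_right _ _))
        (fun j hj1 hj2 => le_trans (hinter i (by omega))
          (le_trans (min_le_right _ _) (hy (i+1) j hj1 hj2)))
      rwa [show n - (i+1) = n - 1 - i by omega] at this
    have sgn1 : ∀ i, i < n → 0 ≤ (-1:ℝ)^(n-1-i) * Q.eval (max (x i) (y i)) := by
      intro i hi
      have e : (-1:ℝ)^(n-1-i) * Q.eval (max (x i) (y i))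
          = (1 - α) * ((-1:ℝ)^(n-1-i) * ∏ j ∈ Finset.range n, (max (x i) (y i) - x j))
            + α * ((-1:ℝ)^(n-1-i) * ∏ j ∈ Finset.range n, (max (x i) (y i) - y j)) := by
        rw [evalQ]; ring
      rw [e]
      exact add_nonneg (mul_nonneg (by linarith) (sgnx i hi))
        (mul_nonneg (by linarith) (sgny i hi))
    have sgn2 : ∀ i, i < n → (-1:ℝ)^(n-1-i) * Q.eval (min (x i) (y i)) ≤ 0 := by
      intro i hi
      have hxl : 0 ≤ (-1:ℝ)^(n-i) * ∏ j ∈ Finset.range n, (min (x i) (y i) - x j) :=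
        SH.sign_helper n i x (min (x i) (y i)) (by omega)
          (fun j hj => le_trans (le_max_left (x j) (y j)) (SH.chain hinter i j hj hi))
          (fun j hj1 hj2 => le_trans (min_le_left _ _) (hx i j hj1 hj2))
      have hyl : 0 ≤ (-1:ℝ)^(n-i) * ∏ j ∈ Finset.range n, (min (x i) (y i) - y j) :=
        SH.sign_helper n i y (min (x i) (y i)) (by omega)
          (fun j hj => le_trans (le_max_right (x j) (y j)) (SH.chain hinter i j hj hi))
          (fun j hj1 hj2 => le_trans (min_le_right _ _) (hy i j hj1 hj2))
      have hs : (-1:ℝ)^(n-i) = -(-1:ℝ)^(n-1-i) := by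
        rw [show n - i = (n-1-i) + 1 by omega, pow_succ]; ring
      rw [hs] at hxl hyl
      have e : (-1:ℝ)^(n-1-i) * Q.eval (min (x i) (y i))
          = -((1 - α) * (-(-1:ℝ)^(n-1-i) * ∏ j ∈ Finset.range n, (min (x i) (y i) - x j))
            + α * (-(-1:ℝ)^(n-1-i) * ∏ j ∈ Finset.range n, (min (x i) (y i) - y j))) := by
        rw [evalQ]; ring
      rw [e]
      have := add_nonneg (mul_nonneg (by linarith : (0:ℝ) ≤ 1 - α) hxl)
        (mul_nonneg (by linarith : (0:ℝ) ≤ α) hyl)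
      linarith
    have key : ∀ i : ℕ, ∃ t : ℝ, i < n →
        (t ∈ Set.Icc (min (x i) (y i)) (max (x i) (y i)) ∧ Q.eval t = 0) := by
      intro i
      by_cases hi : i < n
      · obtain ⟨t, ht1, ht2⟩ := SH.exists_root Q (min (x i) (y i)) (max (x i) (y i))
          (min_le_max) ((-1:ℝ)^(n-1-i)) (pow_ne_zero _ (by norm_num))
          (sgn2 i hi) (sgn1 i hi)
        exact ⟨t, fun _ => ⟨ht1, ht2⟩⟩
      · exact ⟨0, fun h => absurd h hi⟩
    choose t ht using key
    have tcon : ∀ i, i + 1 < n → t i < t (i+1) := by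
      intro i hi
      have h1 := ht i (by omega)
      have h2 := ht (i+1) hi
      have hle : t i ≤ t (i+1) :=
        le_trans h1.1.2 (le_trans (hinter i hi) h2.1.1)
      rcases eq_or_lt_of_le hle with heq | hlt
      · exfalso
        set c := t i with hc
        have hcm : c = max (x i) (y i) :=
          le_antisymm h1.1.2
            (le_trans (le_trans (hinter i hi) h2.1.1) (le_of_eq heq.symm))
        have hA := sgnx i (by omega)
        have hB := sgny i (by omega)
        rw [← hcm] at hA hB
        have heval : (1 - α) * (∏ j ∈ Finset.range n, (c - x j))
            + α * (∏ j ∈ Finset.range n, (c - y j)) = 0 := by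
          rw [← evalQ]; exact h1.2
        set s : ℝ := (-1:ℝ)^(n-1-i) with hsdef
        set A := ∏ j ∈ Finset.range n, (c - x j) with hAdef
        set B := ∏ j ∈ Finset.range n, (c - y j) with hBdef
        have huv : (1 - α) * (s * A) + α * (s * B) = 0 := by
          have : (1 - α) * (s * A) + α * (s * B) = s * ((1 - α) * A + α * B) := by ring
          rw [this, heval, mul_zero]
        have h1u : 0 ≤ (1 - α) * (s * A) := mul_nonneg (by linarith) hA
        have h2v : 0 ≤ α * (s * B) := mul_nonneg (by linarith) hB
        have hsne : s ≠ 0 := pow_ne_zero _ (by norm_num)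
        have hu0 : A = 0 := by
          have h3 : (1 - α) * (s * A) = 0 := by linarith
          rcases mul_eq_zero.mp h3 with h | h
          · exfalso; linarith
          · rcases mul_eq_zero.mp h with h' | h'
            · exact absurd h' hsne
            · exact h'
        have hv0 : B = 0 := by
          have h3 : α * (s * B) = 0 := by linarith
          rcases mul_eq_zero.mp h3 with h | h
          · exfalso; linarith
          · rcases mul_eq_zero.mp h with h' | h'
            · exact absurd h' hsne
            · exact h'
        obtain ⟨j0, hj0, hj0'⟩ := Finset.prod_eq_zero_iff.mp hu0
        obtain ⟨k0, hk0, hk0'⟩ := Finset.prod_eq_zero_iff.mp hv0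
        exact hcom ⟨j0, k0, Finset.mem_range.mp hj0, Finset.mem_range.mp hk0,
          by have e1 : c = x j0 := by linarith [sub_eq_zero.mp hj0']
             have e2 : c = y k0 := by linarith [sub_eq_zero.mp hk0']
             linarith⟩
      · exact hlt
    have tlt : ∀ j i, i < j → j < n → t i < t j := by
      intro j
      induction j with
      | zero => omega
      | succ j ihj =>
        intro i hij hj
        rcases Nat.lt_or_ge i j with h | h
        · exact lt_trans (ihj i h (by omega)) (tcon j hj)
        · have : i = j := by omega
          subst this
          exact tcon i hj
    have hinj : Set.InjOn t (Finset.range n) := by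
      intro i hi j hj hEq
      simp only [Finset.coe_range, Set.mem_Iio] at hi hj
      rcases Nat.lt_trichotomy i j with h | h | h
      · exact absurd hEq (ne_of_lt (tlt j i h hj))
      · exact h
      · exact absurd hEq.symm (ne_of_lt (tlt i j h hi))
    have hsub : Finset.image t (Finset.range n) ⊆ Q.roots.toFinset := by
      intro a ha
      obtain ⟨i, hi, rfl⟩ := Finset.mem_image.mp ha
      exact Multiset.mem_toFinset.mpr (mem_roots'.mpr ⟨hQne, (ht i (Finset.mem_range.mp hi)).2⟩)
    have hlb : n ≤ Q.roots.card := by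
      calc n = (Finset.range n).card := (Finset.card_range n).symm
        _ = (Finset.image t (Finset.range n)).card := (Finset.card_image_of_injOn hinj).symm
        _ ≤ Q.roots.toFinset.card := Finset.card_le_card hsub
        _ ≤ Q.roots.card := Multiset.toFinset_card_le _
    have hub : Q.roots.card ≤ n := by
      have := Q.card_roots' 
      rw [hdeg] at this
      exact this
    omega

theorem segment_hyperbolic (n : ℕ) (x y : ℕ → ℝ)
    (hx : ∀ i j, i ≤ j → j < n → x i ≤ x j)
    (hy : ∀ i j, i ≤ j → j < n → y i ≤ y j)
    (hinter : ∀ i, i + 1 < n → max (x i) (y i) ≤ min (x (i + 1)) (y (i + 1)))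
    (P₁ P₂ : Polynomial ℝ)
    (hP₁ : P₁ = ∏ i ∈ Finset.range n, (X - C (x i)))
    (hP₂ : P₂ = ∏ i ∈ Finset.range n, (X - C (y i))) :
    ∀ α : ℝ, 0 ≤ α → α ≤ 1 → (C (1 - α) * P₁ + C α * P₂).roots.card = n := by
  intro α hα0 hα1
  subst hP₁ hP₂
  exact SH.main n x y hx hy hinter α hα0 hα1
end

section
/- Let P be a monic strictly hyperbolic polynomial of degree n ≥ 2 and λ ∈ ℝ. Then P and P − λP′ have no common roots when λ ≠ 0, and P − λP′ is strictly hyperbolic. -/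
open Polynomial

lemma eval_deriv_aux (n : ℕ) (x : ℕ → ℝ) (i : ℕ) (hi : i < n) :
    (derivative (∏ j ∈ Finset.range n, (X - C (x j)))).eval (x i)
      = ∏ j ∈ (Finset.range n).erase i, (x i - x j) := by
  classical
  have hS : (∏ j ∈ Finset.range n, (X - C (x j)))
      = (Multiset.map (fun a => X - C a) ((Finset.range n).val.map x)).prod := by
    rw [Multiset.map_map, Finset.prod_eq_multiset_prod]; rfl
  have hmem : x i ∈ (Finset.range n).val.map x :=
    Multiset.mem_map.mpr ⟨i, by simp [hi], rfl⟩
  rw [hS, eval_multiset_prod_X_sub_C_derivative hmem]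
  have h1 : (Finset.range n).val = i ::ₘ ((Finset.range n).erase i).val := by
    rw [Finset.erase_val]; exact (Multiset.cons_erase (by simp [hi])).symm
  have herase : ((Finset.range n).val.map x).erase (x i)
      = ((Finset.range n).erase i).val.map x := by
    rw [h1, Multiset.map_cons, Multiset.erase_cons_head]
  rw [herase, Multiset.map_map, Finset.prod_eq_multiset_prod]; rfl

lemma sign_aux (n : ℕ) (x : ℕ → ℝ) (hx : ∀ i j, i < j → j < n → x i < x j) (i : ℕ) (hi : i < n) :
    0 < (-1:ℝ)^(n-1-i) * ∏ j ∈ (Finset.range n).erase i, (x i - x j) := by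
  have hsplit : (Finset.range n).erase i = Finset.range i ∪ Finset.Ico (i+1) n := by
    ext j
    simp only [Finset.mem_erase, Finset.mem_range, Finset.mem_union, Finset.mem_Ico]
    omega
  have hdisj : Disjoint (Finset.range i) (Finset.Ico (i+1) n) := by
    rw [Finset.disjoint_left]
    intro a ha hb
    simp only [Finset.mem_range] at ha
    simp only [Finset.mem_Ico] at hb
    omega
  rw [hsplit, Finset.prod_union hdisj]
  have h1 : 0 < ∏ j ∈ Finset.range i, (x i - x j) :=
    Finset.prod_pos (fun j hj => sub_pos.mpr (hx j i (Finset.mem_range.mp hj) hi))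
  have h3 : 0 < ∏ j ∈ Finset.Ico (i+1) n, (x j - x i) :=
    Finset.prod_pos (fun j hj => sub_pos.mpr (hx i j (Finset.mem_Ico.mp hj).1 (Finset.mem_Ico.mp hj).2))
  have h2 : ∏ j ∈ Finset.Ico (i+1) n, (x i - x j)
      = (-1:ℝ)^(n-1-i) * ∏ j ∈ Finset.Ico (i+1) n, (x j - x i) := by
    calc ∏ j ∈ Finset.Ico (i+1) n, (x i - x j)
        = ∏ j ∈ Finset.Ico (i+1) n, ((-1) * (x j - x i)) :=
          Finset.prod_congr rfl (fun j _ => by ring)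
      _ = (∏ _j ∈ Finset.Ico (i+1) n, (-1:ℝ)) * ∏ j ∈ Finset.Ico (i+1) n, (x j - x i) :=
          Finset.prod_mul_distrib
      _ = (-1:ℝ)^(n-1-i) * ∏ j ∈ Finset.Ico (i+1) n, (x j - x i) := by
          rw [Finset.prod_const, Nat.card_Ico, show n - (i+1) = n - 1 - i from by omega]
  rw [h2]
  have hsq : (-1:ℝ)^(n-1-i) * (-1:ℝ)^(n-1-i) = 1 := by
    rw [← pow_add]; exact Even.neg_one_pow ⟨n-1-i, rfl⟩
  calc (0:ℝ) < (∏ j ∈ Finset.range i, (x i - x j)) * ∏ j ∈ Finset.Ico (i+1) n, (x j - x i) :=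
        mul_pos h1 h3
    _ = (-1:ℝ)^(n-1-i) * ((∏ j ∈ Finset.range i, (x i - x j)) *
          ((-1:ℝ)^(n-1-i) * ∏ j ∈ Finset.Ico (i+1) n, (x j - x i))) := by
        rw [show ∀ a b c : ℝ, a * (b * (a * c)) = (a*a) * (b*c) from fun a b c => by ring, hsq, one_mul]

theorem no_common_roots_and_strictly_hyperbolic (n : ℕ) (hn : 2 ≤ n) (x : ℕ → ℝ)
    (hx : ∀ i j, i < j → j < n → x i < x j)
    (P : Polynomial ℝ)
    (hP : P = ∏ i ∈ Finset.range n, (X - C (x i))) :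
    ∀ l : ℝ,
      (P - C l * Polynomial.derivative P).roots.card = n ∧
      (P - C l * Polynomial.derivative P).roots.Nodup ∧
      (l ≠ 0 → ∀ t : ℝ, P.IsRoot t →
        ¬ (P - C l * Polynomial.derivative P).IsRoot t) := by
  classical
  intro l
  set Q : Polynomial ℝ := P - C l * derivative P with hQdef
  have hPmonic : P.Monic := by
    rw [hP]; exact monic_prod_of_monic _ _ (fun i _ => monic_X_sub_C (x i))
  have hP0 : P ≠ 0 := hPmonic.ne_zero
  have hPdeg : P.natDegree = n := by
    rw [hP, natDegree_prod_of_monic _ _ (fun i _ => monic_X_sub_C (x i))]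
    simp [natDegree_X_sub_C]
  have hevalP : ∀ t : ℝ, P.eval t = ∏ j ∈ Finset.range n, (t - x j) := by
    intro t; rw [hP, eval_prod]; simp
  set d : ℕ → ℝ := fun i => (derivative P).eval (x i) with hddef
  have hd : ∀ i, i < n → d i = ∏ j ∈ (Finset.range n).erase i, (x i - x j) := by
    intro i hi; rw [hddef]; simp only []; rw [hP]; exact eval_deriv_aux n x i hi
  have hsd : ∀ i, i < n → 0 < (-1:ℝ)^(n-1-i) * d i := by
    intro i hi; rw [hd i hi]; exact sign_aux n x hx i hi
  have hdne : ∀ i, i < n → d i ≠ 0 := by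
    intro i hi h0
    have := hsd i hi
    rw [h0, mul_zero] at this
    exact lt_irrefl 0 this
  have hPx : ∀ i, i < n → P.eval (x i) = 0 := by
    intro i hi
    rw [hevalP]
    exact Finset.prod_eq_zero (Finset.mem_range.mpr hi) (by ring)
  have hQeval : ∀ t : ℝ, Q.eval t = P.eval t - l * (derivative P).eval t := by
    intro t; simp [hQdef]
  have hQx : ∀ i, i < n → Q.eval (x i) = -(l * d i) := by
    intro i hi; rw [hQeval, hPx i hi, hddef]; ring
  -- part 3
  have part3 : l ≠ 0 → ∀ t : ℝ, P.IsRoot t → ¬ Q.IsRoot t := by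
    intro hl t ht hQt
    have ht' : ∏ j ∈ Finset.range n, (t - x j) = 0 := by rw [← hevalP]; exact ht
    obtain ⟨i, hi, hti⟩ := Finset.prod_eq_zero_iff.mp ht'
    have hti' : t = x i := by linarith [sub_eq_zero.mp hti]
    have : Q.eval (x i) = 0 := by rw [← hti']; exact hQt
    rw [hQx i (Finset.mem_range.mp hi)] at this
    have : l * d i = 0 := by linarith
    rcases mul_eq_zero.mp this with h | h
    · exact hl h
    · exact hdne i (Finset.mem_range.mp hi) h
  have hinj : ∀ i ∈ (Finset.range n).val, ∀ j ∈ (Finset.range n).val, x i = x j → i = j := by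
    intro i hi j hj hij
    simp only [Finset.mem_val, Finset.mem_range] at hi hj
    rcases lt_trichotomy i j with h | h | h
    · exact absurd hij (ne_of_lt (hx i j h hj))
    · exact h
    · exact absurd hij.symm (ne_of_lt (hx j i h hi))
  have main : Q.roots.card = n ∧ Q.roots.Nodup := by
    by_cases hl : l = 0
    · -- l = 0 : Q = P
      have hQP : Q = P := by rw [hQdef, hl]; simp
      have hPm : P = (Multiset.map (fun a => X - C a) ((Finset.range n).val.map x)).prod := by
        rw [hP, Multiset.map_map, Finset.prod_eq_multiset_prod]; rfl
      have hroots : Q.roots = (Finset.range n).val.map x := by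
        rw [hQP, hPm, roots_multiset_prod_X_sub_C]
      constructor
      · rw [hroots, Multiset.card_map]; simp
      · rw [hroots]
        exact Multiset.Nodup.map_on hinj (Finset.range n).nodup
    · -- l ≠ 0
      have hQmonic : Q.Monic := by
        have hdlt : degree (-(C l * derivative P)) < degree P := by
          rw [degree_neg]
          calc degree (C l * derivative P) ≤ degree (C l) + degree (derivative P) :=
                degree_mul_le _ _
            _ ≤ 0 + degree (derivative P) := add_le_add degree_C_le le_rfl
            _ = degree (derivative P) := zero_add _
            _ < degree P := degree_derivative_lt hP0
        have := hPmonic.add_of_left hdlt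
        rwa [← sub_eq_add_neg] at this
      have hQ0 : Q ≠ 0 := hQmonic.ne_zero
      have hQdeg : Q.natDegree = n := by
        have hdlt : degree (C l * derivative P) < degree P := by
          calc degree (C l * derivative P) ≤ degree (C l) + degree (derivative P) :=
                degree_mul_le _ _
            _ ≤ 0 + degree (derivative P) := add_le_add degree_C_le le_rfl
            _ = degree (derivative P) := zero_add _
            _ < degree P := degree_derivative_lt hP0
        rw [hQdef, natDegree_eq_of_degree_eq (degree_sub_eq_left_of_degree_lt hdlt), hPdeg]
      -- interlacing roots via IVT
      have key : ∀ i : ℕ, ∃ yv : ℝ, i + 1 < n →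
          (yv ∈ Set.Ioo (x i) (x (i+1)) ∧ Q.IsRoot yv) := by
        intro i
        by_cases h : i + 1 < n
        · have e2 := hsd (i+1) h
          have e1 := hsd i (by omega)
          set k := n - 1 - (i+1) with hk
          have hkk : n - 1 - i = k + 1 := by omega
          rw [hkk] at e1
          have hsq : (-1:ℝ)^k * (-1:ℝ)^k = 1 := by
            rw [← pow_add]; exact Even.neg_one_pow ⟨k, rfl⟩
          have hdd : d i * d (i+1) < 0 := by
            have e3 : 0 < ((-1:ℝ)^(k+1) * d i) * ((-1:ℝ)^k * d (i+1)) := mul_pos e1 e2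
            have e4 : ((-1:ℝ)^(k+1) * d i) * ((-1:ℝ)^k * d (i+1))
                = -(((-1:ℝ)^k * (-1:ℝ)^k) * (d i * d (i+1))) := by rw [pow_succ]; ring
            rw [e4, hsq, one_mul] at e3
            linarith
          have hQQ : Q.eval (x i) * Q.eval (x (i+1)) < 0 := by
            rw [hQx i (by omega), hQx (i+1) h]
            have e5 : (-(l * d i)) * (-(l * d (i+1))) = (l * l) * (d i * d (i+1)) := by ring
            rw [e5]
            exact mul_neg_of_pos_of_neg (mul_self_pos.mpr hl) hdd
          have hxlt : x i ≤ x (i+1) := (hx i (i+1) (lt_add_one i) h).le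
          have hcont : ContinuousOn (fun t => Q.eval t) (Set.Icc (x i) (x (i+1))) :=
            Q.continuous.continuousOn
          rcases mul_neg_iff.mp hQQ with ⟨hp1, hn2⟩ | ⟨hn1, hp2⟩
          · obtain ⟨yv, hyv, hyv0⟩ := intermediate_value_Ioo' hxlt hcont ⟨hn2, hp1⟩
            exact ⟨yv, fun _ => ⟨hyv, hyv0⟩⟩
          · obtain ⟨yv, hyv, hyv0⟩ := intermediate_value_Ioo hxlt hcont ⟨hn1, hp2⟩
            exact ⟨yv, fun _ => ⟨hyv, hyv0⟩⟩
        · exact ⟨0, fun h' => absurd h' h⟩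
      choose y hy using key
      have hylt : ∀ i, i + 1 < n → x i < y i ∧ y i < x (i+1) :=
        fun i hi => ⟨(hy i hi).1.1, (hy i hi).1.2⟩
      have hyroot : ∀ i, i + 1 < n → Q.IsRoot (y i) := fun i hi => (hy i hi).2
      have hxmono : ∀ i j, i ≤ j → j < n → x i ≤ x j := by
        intro i j hij hj
        rcases eq_or_lt_of_le hij with h | h
        · rw [h]
        · exact (hx i j h hj).le
      have hymono : ∀ i j, i < j → j < n - 1 → y i < y j := by
        intro i j hij hj
        have hi1 : i + 1 < n := by omega
        have hj1 : j + 1 < n := by omega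
        calc y i < x (i+1) := (hylt i hi1).2
          _ ≤ x j := hxmono (i+1) j (by omega) (by omega)
          _ < y j := (hylt j hj1).1
      set M : Multiset ℝ := (Finset.range (n-1)).val.map y with hMdef
      have hMnodup : M.Nodup := by
        refine Multiset.Nodup.map_on ?_ (Finset.range (n-1)).nodup
        intro i hi j hj hij
        simp only [Finset.mem_val, Finset.mem_range] at hi hj
        rcases lt_trichotomy i j with h | h | h
        · exact absurd hij (ne_of_lt (hymono i j h hj))
        · exact h
        · exact absurd hij.symm (ne_of_lt (hymono j i h hi))
      have hMcard : M.card = n - 1 := by rw [hMdef, Multiset.card_map]; simp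
      have hMle : M ≤ Q.roots := by
        rw [Multiset.le_iff_subset hMnodup]
        intro a ha
        obtain ⟨i, hi, rfl⟩ := Multiset.mem_map.mp ha
        simp only [Finset.mem_val, Finset.mem_range] at hi
        exact (mem_roots hQ0).mpr (hyroot i (by omega))
      set D : Polynomial ℝ := (Multiset.map (fun a => X - C a) M).prod with hDdef
      have hDdvd : D ∣ Q :=
        dvd_trans (Multiset.prod_dvd_prod_of_le (Multiset.map_le_map hMle))
          (prod_multiset_X_sub_C_dvd Q)
      obtain ⟨R, hQR⟩ := hDdvd
      have hDmonic : D.Monic := by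
        refine monic_multiset_prod_of_monic _ _ ?_
        intro a ha
        exact monic_X_sub_C a
      have hD0 : D ≠ 0 := hDmonic.ne_zero
      have hDdeg : D.natDegree = n - 1 := by
        rw [hDdef, natDegree_multiset_prod_of_monic _ (fun f hf => by
          obtain ⟨a, _, rfl⟩ := Multiset.mem_map.mp hf; exact monic_X_sub_C a)]
        rw [Multiset.map_map]
        have : (Multiset.map (natDegree ∘ fun a => X - C a) M) = Multiset.map (fun _ => 1) M := by
          refine Multiset.map_congr rfl ?_
          intro a _
          simp [natDegree_X_sub_C]
        rw [this, Multiset.map_const', Multiset.sum_replicate, smul_eq_mul, mul_one, hMcard]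
      have hRmonic : R.Monic := hDmonic.of_mul_monic_left (hQR ▸ hQmonic)
      have hR0 : R ≠ 0 := hRmonic.ne_zero
      have hRdeg : R.natDegree = 1 := by
        have := hQdeg
        rw [hQR, natDegree_mul hD0 hR0, hDdeg] at this
        omega
      set c : ℝ := -(R.coeff 0) with hcdef
      have hRX : R = X - C c := by
        have h1 : R = C (R.coeff 1) * X + C (R.coeff 0) :=
          eq_X_add_C_of_natDegree_le_one (by omega)
        have h2 : R.coeff 1 = 1 := by
          have : R.coeff R.natDegree = 1 := hRmonic.coeff_natDegree
          rwa [hRdeg] at this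
        rw [h1, h2, hcdef, map_neg, sub_neg_eq_add, map_one, one_mul]
      have hDeval : ∀ t : ℝ, D.eval t = ∏ i ∈ Finset.range (n-1), (t - y i) := by
        intro t
        rw [hDdef, eval_multiset_prod, hMdef, Multiset.map_map, Multiset.map_map,
          Finset.prod_eq_multiset_prod]
        refine congrArg Multiset.prod (Multiset.map_congr rfl ?_)
        intro a _
        simp
      have hQfact : ∀ t : ℝ, Q.eval t = (∏ i ∈ Finset.range (n-1), (t - y i)) * (t - c) := by
        intro t
        rw [hQR, eval_mul, hDeval, hRX]
        simp
      -- c is outside the range of the y's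
      have hcM : c ∉ M := by
        rcases lt_or_gt_of_ne hl with hlneg | hlpos
        · -- l < 0 : c < x 0
          have hcx0 : c < x 0 := by
            have e : 0 < (-1:ℝ)^(n-1) * d 0 := by
              have := hsd 0 (by omega)
              rwa [Nat.sub_zero] at this
            have hsq : (-1:ℝ)^(n-1) * (-1:ℝ)^(n-1) = 1 := by
              rw [← pow_add]; exact Even.neg_one_pow ⟨n-1, rfl⟩
            have hp : 0 < ∏ i ∈ Finset.range (n-1), (y i - x 0) := by
              refine Finset.prod_pos ?_
              intro i hi
              simp only [Finset.mem_range] at hi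
              have : x 0 ≤ x i := hxmono 0 i (by omega) (by omega)
              have := (hylt i (by omega)).1
              linarith
            have hDe : ∏ i ∈ Finset.range (n-1), (x 0 - y i)
                = (-1:ℝ)^(n-1) * ∏ i ∈ Finset.range (n-1), (y i - x 0) := by
              calc ∏ i ∈ Finset.range (n-1), (x 0 - y i)
                  = ∏ i ∈ Finset.range (n-1), ((-1) * (y i - x 0)) :=
                    Finset.prod_congr rfl (fun i _ => by ring)
                _ = (∏ _i ∈ Finset.range (n-1), (-1:ℝ)) *
                      ∏ i ∈ Finset.range (n-1), (y i - x 0) := Finset.prod_mul_distrib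
                _ = (-1:ℝ)^(n-1) * ∏ i ∈ Finset.range (n-1), (y i - x 0) := by
                    rw [Finset.prod_const, Finset.card_range]
            have heq' : (-1:ℝ)^(n-1) * (∏ i ∈ Finset.range (n-1), (y i - x 0)) * (x 0 - c)
                = -(l * d 0) := by
              have h1 := hQfact (x 0)
              rw [hQx 0 (by omega), hDe] at h1
              linarith [h1]
            have h5 : (∏ i ∈ Finset.range (n-1), (y i - x 0)) * (x 0 - c)
                = (-l) * ((-1:ℝ)^(n-1) * d 0) := by
              calc (∏ i ∈ Finset.range (n-1), (y i - x 0)) * (x 0 - c)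
                  = ((-1:ℝ)^(n-1) * (-1:ℝ)^(n-1)) *
                      ((∏ i ∈ Finset.range (n-1), (y i - x 0)) * (x 0 - c)) := by
                    rw [hsq, one_mul]
                _ = (-1:ℝ)^(n-1) * ((-1:ℝ)^(n-1) *
                      (∏ i ∈ Finset.range (n-1), (y i - x 0)) * (x 0 - c)) := by ring
                _ = (-1:ℝ)^(n-1) * -(l * d 0) := by rw [heq']
                _ = (-l) * ((-1:ℝ)^(n-1) * d 0) := by ring
            have hpos : 0 < (-l) * ((-1:ℝ)^(n-1) * d 0) := mul_pos (by linarith) e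
            nlinarith [h5, hp, hpos]
          intro hc
          obtain ⟨i, hi, hyc⟩ := Multiset.mem_map.mp hc
          simp only [Finset.mem_val, Finset.mem_range] at hi
          have h1 : x 0 ≤ x i := hxmono 0 i (by omega) (by omega)
          have h2 := (hylt i (by omega)).1
          linarith [hyc.symm ▸ hcx0]
        · -- 0 < l : x (n-1) < c
          have hcxn : x (n-1) < c := by
            have hdpos : 0 < d (n-1) := by
              have := hsd (n-1) (by omega)
              rwa [show n - 1 - (n-1) = 0 from by omega, pow_zero, one_mul] at this
            have hQn : Q.eval (x (n-1)) < 0 := by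
              rw [hQx (n-1) (by omega)]
              nlinarith [mul_pos hlpos hdpos]
            have hDp : 0 < ∏ i ∈ Finset.range (n-1), (x (n-1) - y i) := by
              refine Finset.prod_pos ?_
              intro i hi
              simp only [Finset.mem_range] at hi
              have h1 := (hylt i (by omega)).2
              have h2 : x (i+1) ≤ x (n-1) := hxmono (i+1) (n-1) (by omega) (by omega)
              linarith
            have h1 := hQfact (x (n-1))
            rw [h1] at hQn
            nlinarith [hQn, hDp]
          intro hc
          obtain ⟨i, hi, hyc⟩ := Multiset.mem_map.mp hc
          simp only [Finset.mem_val, Finset.mem_range] at hi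
          have h1 := (hylt i (by omega)).2
          have h2 : x (i+1) ≤ x (n-1) := hxmono (i+1) (n-1) (by omega) (by omega)
          linarith [hyc.symm ▸ hcxn]
      have hroots : Q.roots = M + {c} := by
        rw [hQR, roots_mul (hQR ▸ hQ0), hDdef, roots_multiset_prod_X_sub_C, hRX, roots_X_sub_C]
      constructor
      · rw [hroots, Multiset.card_add, hMcard, Multiset.card_singleton]
        omega
      · rw [hroots, Multiset.nodup_add]
        refine ⟨hMnodup, Multiset.nodup_singleton c, ?_⟩
        rw [disjoint_comm, Multiset.singleton_disjoint]
        exact hcM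
  exact ⟨main.1, main.2, part3⟩
end
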